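/- arXiv:2211.04820 — 4 statements merged into one kernel-verified Lean document; each statement's English description precedes it below -/
import Mathlib

section
/- Let P be a polyomino and let G_P be the graph whose vertices are the cells of P and whose edges are the attacking pairs. Then G_P is well-covered (all maximal independent sets of G_P have the same cardinality) if and only if G_P is localizable, i.e., the vertex set of G_P admits a partition into cliques each of which intersects every maximal independent set of G_P. -/
/-- A cell of the grid, identified with its lower-left corner. -/
abbrev Cell : Type := ℤ × ℤ

/-- Two cells are adjacent if they differ by `(±1,0)` or `(0,±1)`. -/
def Adjacent (c d : Cell) : Prop :=
  (c.1 = d.1 ∧ (c.2 = d.2 + 1 ∨ d.2 = c.2 + 1)) ∨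
  (c.2 = d.2 ∧ (c.1 = d.1 + 1 ∨ d.1 = c.1 + 1))

/-- A polyomino: a finite nonempty set of cells, any two of which are joined by a
path of adjacent cells inside the set. -/
def IsPolyomino (P : Finset Cell) : Prop :=
  P.Nonempty ∧ ∀ c ∈ P, ∀ d ∈ P,
    Relation.ReflTransGen (fun a b => Adjacent a b ∧ a ∈ P ∧ b ∈ P) c d

/-- A horizontal segment of consecutive cells in a row. -/
def IsHSeg (S : Finset Cell) : Prop :=
  ∃ y a b : ℤ, a ≤ b ∧ S = (Finset.Icc a b).image (fun x => (x, y))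

/-- A vertical segment of consecutive cells in a column. -/
def IsVSeg (S : Finset Cell) : Prop :=
  ∃ x a b : ℤ, a ≤ b ∧ S = (Finset.Icc a b).image (fun y => (x, y))

/-- A maximal horizontal cell interval of `P`. -/
def IsMaxHInterval (P I : Finset Cell) : Prop :=
  IsHSeg I ∧ I ⊆ P ∧ ∀ I', IsHSeg I' → I' ⊆ P → I ⊆ I' → I' = I

/-- A maximal vertical cell interval of `P`. -/
def IsMaxVInterval (P I : Finset Cell) : Prop :=
  IsVSeg I ∧ I ⊆ P ∧ ∀ I', IsVSeg I' → I' ⊆ P → I ⊆ I' → I' = I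

/-- A maximal cell interval of `P`. -/
def IsMaxInterval (P I : Finset Cell) : Prop :=
  IsMaxHInterval P I ∨ IsMaxVInterval P I

/-- Two distinct cells of `P` attack each other if they lie in a common maximal
cell interval of `P`. -/
def Attacks (P : Finset Cell) (c d : Cell) : Prop :=
  c ≠ d ∧ ∃ I, IsMaxInterval P I ∧ c ∈ I ∧ d ∈ I

/-- A set of pairwise non-attacking cells of `P` (a face of the rook complex). -/
def IsRookSet (P F : Finset Cell) : Prop :=
  F ⊆ P ∧ ∀ c ∈ F, ∀ d ∈ F, ¬ Attacks P c d

/-- A maximal set of pairwise non-attacking cells of `P` (a facet of the rook complex). -/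
def IsMaxRookSet (P F : Finset Cell) : Prop :=
  IsRookSet P F ∧ ∀ G, IsRookSet P G → F ⊆ G → G = F

/-- An interval `I` is embedded if some set `F` of pairwise non-attacking cells,
disjoint from `I`, attacks every cell of `I`. -/
def IsEmbedded (P I : Finset Cell) : Prop :=
  ∃ F : Finset Cell, IsRookSet P F ∧ F ∩ I = ∅ ∧ ∀ c ∈ I, ∃ f ∈ F, Attacks P f c

/-- A partition of `P`: pairwise disjoint maximal cell intervals whose union is `P`. -/
def IsPartition (P : Finset Cell) (A : Finset (Finset Cell)) : Prop :=
  (∀ I ∈ A, IsMaxInterval P I) ∧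
  (∀ I ∈ A, ∀ J ∈ A, I ≠ J → Disjoint I J) ∧
  A.biUnion id = P

/-- A super partition: a partition none of whose intervals is embedded. -/
def IsSuperPartition (P : Finset Cell) (A : Finset (Finset Cell)) : Prop :=
  IsPartition P A ∧ ∀ I ∈ A, ¬ IsEmbedded P I

/-- `P` is a square: a translate of the `n × n` block of cells for some `n ≥ 1`. -/
def IsSquareBlock (P : Finset Cell) : Prop :=
  ∃ a b n : ℤ, 1 ≤ n ∧ P = Finset.Icc a (a + n - 1) ×ˢ Finset.Icc b (b + n - 1)

/-- The graph `G_P` on the cells of `P` whose edges are the attacking pairs. -/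
def GP (P : Finset Cell) : SimpleGraph {c : Cell // c ∈ P} where
  Adj c d := Attacks P (c : Cell) (d : Cell)
  symm := by
    constructor
    rintro c d ⟨hne, I, hI, hc, hd⟩
    exact ⟨hne.symm, I, hI, hd, hc⟩
  loopless := by
    constructor
    rintro c ⟨hne, -⟩
    exact hne rfl

/-- The complement graph `Ḡ_P`. -/
def GBar (P : Finset Cell) : SimpleGraph {c : Cell // c ∈ P} := (GP P)ᶜ

/-- `G` has an induced cycle of length `n`: an injective map from `ZMod n`
whose image induces exactly the cycle adjacencies. -/
def HasInducedCycle {V : Type*} (G : SimpleGraph V) (n : ℕ) : Prop :=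
  3 ≤ n ∧ ∃ f : ZMod n → V, Function.Injective f ∧
    ∀ i j : ZMod n, G.Adj (f i) (f j) ↔ (i = j + 1 ∨ j = i + 1)

/-- A graph is chordal if it has no induced cycle of length at least 4. -/
def IsChordal {V : Type*} (G : SimpleGraph V) : Prop :=
  ∀ n, 4 ≤ n → ¬ HasInducedCycle G n

/-- `P` is simple: any two cells outside `P` are joined by a path of adjacent
cells outside `P`. -/
def IsSimple (P : Finset Cell) : Prop :=
  ∀ c d : Cell, c ∉ P → d ∉ P →
    Relation.ReflTransGen (fun a b => Adjacent a b ∧ a ∉ P ∧ b ∉ P) c d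

/-- `P` is thin: it contains no four cells forming a `2 × 2` square. -/
def IsThin (P : Finset Cell) : Prop :=
  ¬ ∃ a : Cell, ({a, (a.1 + 1, a.2), (a.1, a.2 + 1), (a.1 + 1, a.2 + 1)} : Finset Cell) ⊆ P

/-- A path of distinct cells of `P`, consecutive cells being adjacent. -/
def IsCellPath (P : Finset Cell) (l : List Cell) : Prop :=
  l.Nodup ∧ (∀ c ∈ l, c ∈ P) ∧ l.Chain' Adjacent

/-- The number of changes of direction of a path of cells: positions `k`
(with `1 ≤ k ≤ length - 2`) where the `(k-1)`-st and `(k+1)`-st cells differ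
in both coordinates. -/
def dirChanges (l : List Cell) : ℕ :=
  ((Finset.Ico 1 (l.length - 1)).filter (fun k =>
    (l.getD (k - 1) (0, 0)).1 ≠ (l.getD (k + 1) (0, 0)).1 ∧
    (l.getD (k - 1) (0, 0)).2 ≠ (l.getD (k + 1) (0, 0)).2)).card

/-- The eight rotations/reflections of the grid. -/
def dihedralMaps : List (Cell → Cell) :=
  [fun p => (p.1, p.2), fun p => (-p.2, p.1), fun p => (-p.1, -p.2), fun p => (p.2, -p.1),
   fun p => (p.2, p.1), fun p => (-p.1, p.2), fun p => (-p.2, -p.1), fun p => (p.1, -p.2)]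

/-- `P` is obtained from `Q` by a translation, rotation or reflection of `ℤ²`. -/
def CongruentTo (P Q : Finset Cell) : Prop :=
  ∃ g ∈ dihedralMaps, ∃ t : Cell, P = Q.image (fun p => g p + t)

/-- A brush polyomino with handle `J`. -/
def IsBrush (P J : Finset Cell) : Prop :=
  IsPolyomino P ∧ IsSimple P ∧ IsThin P ∧ IsMaxInterval P J ∧
  (∀ I, IsMaxInterval P I → 2 ≤ I.card → I ≠ J → (I ∩ J).Nonempty) ∧
  (∀ c ∈ P, c ∈ J ∨ ∃ I, IsMaxInterval P I ∧ 2 ≤ I.card ∧ c ∈ I)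

/-- A short brush polyomino: a brush all of whose bristles have at most two cells. -/
def IsShortBrush (P : Finset Cell) : Prop :=
  ∃ J, IsBrush P J ∧ ∀ I, IsMaxInterval P I → I ≠ J → I.card ≤ 2

/-- A pure brush polyomino: handle `J` of cardinality `d` together with `d`
pairwise disjoint bristles `I 0, …, I (d-1)` perpendicular to `J`, each meeting
`J`, whose union is `P`. -/
def IsPureBrush (P J : Finset Cell) (d : ℕ) (I : Fin d → Finset Cell) : Prop :=
  IsPolyomino P ∧ IsSimple P ∧ IsThin P ∧
  J.card = d ∧
  ((IsMaxHInterval P J ∧ ∀ k, IsMaxVInterval P (I k)) ∨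
   (IsMaxVInterval P J ∧ ∀ k, IsMaxHInterval P (I k))) ∧
  (∀ j k, j ≠ k → Disjoint (I j) (I k)) ∧
  (∀ k, ((I k) ∩ J).Nonempty) ∧
  Finset.univ.biUnion I = P

/-- The `k`-th elementary symmetric polynomial of `x 0, …, x (d-1)`. -/
def esymm {R : Type*} [CommRing R] {d : ℕ} (k : ℕ) (x : Fin d → R) : R :=
  ∑ s ∈ Finset.powersetCard k (Finset.univ : Finset (Fin d)), ∏ i ∈ s, x i

/-- `G_P` has an induced matching with `n` edges `{A i, B i}`. -/
def HasInducedMatching (P : Finset Cell) (n : ℕ) : Prop :=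
  ∃ A B : Fin n → Cell,
    (∀ i, Attacks P (A i) (B i)) ∧
    (∀ i j, i ≠ j → A i ≠ A j) ∧
    (∀ i j, i ≠ j → B i ≠ B j) ∧
    (∀ i j, A i ≠ B j) ∧
    (∀ i j, i ≠ j →
      ¬ Attacks P (A i) (A j) ∧ ¬ Attacks P (A i) (B j) ∧ ¬ Attacks P (B i) (B j))

/-- The induced matching number `ν(G_P)`. -/
noncomputable def matchNum (P : Finset Cell) : ℕ := sSup {n | HasInducedMatching P n}

/-- `c` is a single cell of the maximal interval `I`: the maximal interval of `P`
through `c` perpendicular to `I` is `{c}`. -/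
def IsSingleCell (P I : Finset Cell) (c : Cell) : Prop :=
  c ∈ I ∧
  ((IsMaxHInterval P I ∧ ∀ I', IsMaxVInterval P I' → c ∈ I' → I' = {c}) ∨
   (IsMaxVInterval P I ∧ ∀ I', IsMaxHInterval P I' → c ∈ I' → I' = {c}))


section Statement4Aux

attribute [local instance] Classical.propDecidable

namespace S4

lemma attacks_symm {P : Finset Cell} {c d : Cell} (h : Attacks P c d) : Attacks P d c := by
  obtain ⟨hne, I, hI, hc, hd⟩ := h
  exact ⟨hne.symm, I, hI, hd, hc⟩

lemma rook_subset {P F G : Finset Cell} (hF : IsRookSet P F) (hG : G ⊆ F) : IsRookSet P G :=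
  ⟨hG.trans hF.1, fun c hc d hd => hF.2 c (hG hc) d (hG hd)⟩

lemma rook_insert {P F : Finset Cell} (hF : IsRookSet P F) {z : Cell} (hz : z ∈ P)
    (h : ∀ g ∈ F, ¬ Attacks P z g) : IsRookSet P (insert z F) := by
  constructor
  · intro c hc
    rcases Finset.mem_insert.1 hc with rfl | hc
    · exact hz
    · exact hF.1 hc
  · intro c hc d hd hcd
    rw [Finset.mem_insert] at hc hd
    rcases hc with rfl | hc
    · rcases hd with rfl | hd
      · exact hcd.1 rfl
      · exact h d hd hcd
    · rcases hd with rfl | hd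
      · exact h c hc (attacks_symm hcd)
      · exact hF.2 c hc d hd hcd

lemma maxH_subset {P I : Finset Cell} (h : IsMaxHInterval P I) : I ⊆ P := h.2.1
lemma maxV_subset {P I : Finset Cell} (h : IsMaxVInterval P I) : I ⊆ P := h.2.1

lemma maxInterval_subset {P I : Finset Cell} (h : IsMaxInterval P I) : I ⊆ P := by
  rcases h with h | h <;> exact h.2.1

lemma mem_hseg {a b y : ℤ} {p : Cell} :
    p ∈ (Finset.Icc a b).image (fun x => ((x, y) : Cell)) ↔ a ≤ p.1 ∧ p.1 ≤ b ∧ p.2 = y := by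
  constructor
  · rintro h
    obtain ⟨t, ht, rfl⟩ := Finset.mem_image.1 h
    rw [Finset.mem_Icc] at ht
    exact ⟨ht.1, ht.2, rfl⟩
  · rintro ⟨h1, h2, h3⟩
    exact Finset.mem_image.2 ⟨p.1, Finset.mem_Icc.2 ⟨h1, h2⟩, by rw [← h3]⟩

lemma mem_vseg {a b x : ℤ} {p : Cell} :
    p ∈ (Finset.Icc a b).image (fun y => ((x, y) : Cell)) ↔ a ≤ p.2 ∧ p.2 ≤ b ∧ p.1 = x := by
  constructor
  · rintro h
    obtain ⟨t, ht, rfl⟩ := Finset.mem_image.1 h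
    rw [Finset.mem_Icc] at ht
    exact ⟨ht.1, ht.2, rfl⟩
  · rintro ⟨h1, h2, h3⟩
    exact Finset.mem_image.2 ⟨p.2, Finset.mem_Icc.2 ⟨h1, h2⟩, by rw [← h3]⟩

lemma hseg_nonempty {I : Finset Cell} (h : IsHSeg I) : I.Nonempty := by
  obtain ⟨y, a, b, hab, rfl⟩ := h
  exact ⟨(a, y), mem_hseg.2 ⟨le_refl _, hab, rfl⟩⟩

lemma vseg_nonempty {I : Finset Cell} (h : IsVSeg I) : I.Nonempty := by
  obtain ⟨x, a, b, hab, rfl⟩ := h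
  exact ⟨(x, a), mem_vseg.2 ⟨le_refl _, hab, rfl⟩⟩

lemma maxInterval_nonempty {P I : Finset Cell} (h : IsMaxInterval P I) : I.Nonempty := by
  rcases h with h | h
  · exact hseg_nonempty h.1
  · exact vseg_nonempty h.1

/-- Existence of the maximal horizontal interval through a cell. -/
lemma exists_maxH (P : Finset Cell) (c : Cell) (hc : c ∈ P) :
    ∃ I, IsMaxHInterval P I ∧ c ∈ I := by
  obtain ⟨x, y⟩ := c
  set R : Finset ℤ := (P.filter (fun p => p.2 = y)).image Prod.fst with hR
  have hxR : x ∈ R := Finset.mem_image.2 ⟨(x, y), Finset.mem_filter.2 ⟨hc, rfl⟩, rfl⟩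
  have hmemR : ∀ t : ℤ, (t, y) ∈ P → t ∈ R := fun t ht =>
    Finset.mem_image.2 ⟨(t, y), Finset.mem_filter.2 ⟨ht, rfl⟩, rfl⟩
  set T : Finset ℤ := R.filter (fun t => x ≤ t ∧ ∀ s ∈ Finset.Icc x t, ((s, y) : Cell) ∈ P)
    with hT
  have hxT : x ∈ T := by
    refine Finset.mem_filter.2 ⟨hxR, le_refl _, ?_⟩
    intro s hs
    rw [Finset.mem_Icc] at hs
    have : s = x := by omega
    rwa [this]
  set T' : Finset ℤ := R.filter (fun t => t ≤ x ∧ ∀ s ∈ Finset.Icc t x, ((s, y) : Cell) ∈ P)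
    with hT'
  have hxT' : x ∈ T' := by
    refine Finset.mem_filter.2 ⟨hxR, le_refl _, ?_⟩
    intro s hs
    rw [Finset.mem_Icc] at hs
    have : s = x := by omega
    rwa [this]
  set b := T.max' ⟨x, hxT⟩ with hb
  set a := T'.min' ⟨x, hxT'⟩ with ha
  have hbT : b ∈ T := T.max'_mem _
  have haT : a ∈ T' := T'.min'_mem _
  have hxb : x ≤ b := (Finset.mem_filter.1 hbT).2.1
  have hax : a ≤ x := (Finset.mem_filter.1 haT).2.1
  have hfill_r : ∀ s ∈ Finset.Icc x b, ((s, y) : Cell) ∈ P := (Finset.mem_filter.1 hbT).2.2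
  have hfill_l : ∀ s ∈ Finset.Icc a x, ((s, y) : Cell) ∈ P := (Finset.mem_filter.1 haT).2.2
  have hbout : ((b + 1, y) : Cell) ∉ P := by
    intro hmem
    have hb1T : b + 1 ∈ T := by
      refine Finset.mem_filter.2 ⟨hmemR _ hmem, by linarith, ?_⟩
      intro s hs
      rw [Finset.mem_Icc] at hs
      rcases lt_or_eq_of_le hs.2 with h | h
      · exact hfill_r s (Finset.mem_Icc.2 ⟨hs.1, by linarith⟩)
      · rwa [h]
    have := Finset.le_max' T _ hb1T
    omega
  have haout : ((a - 1, y) : Cell) ∉ P := by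
    intro hmem
    have ha1T : a - 1 ∈ T' := by
      refine Finset.mem_filter.2 ⟨hmemR _ hmem, by linarith, ?_⟩
      intro s hs
      rw [Finset.mem_Icc] at hs
      rcases lt_or_eq_of_le hs.1 with h | h
      · exact hfill_l s (Finset.mem_Icc.2 ⟨by linarith, hs.2⟩)
      · rw [← h]; exact hmem
    have := Finset.min'_le T' _ ha1T
    omega
  have hfill : ∀ s ∈ Finset.Icc a b, ((s, y) : Cell) ∈ P := by
    intro s hs
    rw [Finset.mem_Icc] at hs
    rcases le_total s x with h | h
    · exact hfill_l s (Finset.mem_Icc.2 ⟨hs.1, h⟩)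
    · exact hfill_r s (Finset.mem_Icc.2 ⟨h, hs.2⟩)
  refine ⟨(Finset.Icc a b).image (fun t => (t, y)), ⟨⟨y, a, b, le_trans hax hxb, rfl⟩, ?_, ?_⟩, ?_⟩
  · intro p hp
    rw [mem_hseg] at hp
    have : p = (p.1, y) := by
      rw [← hp.2.2]
    rw [this]
    exact hfill p.1 (Finset.mem_Icc.2 ⟨hp.1, hp.2.1⟩)
  · rintro I' ⟨y', a', b', hab', rfl⟩ hI'P hsub
    have hmm : ∀ p : Cell, p ∈ (Finset.Icc a b).image (fun t => ((t, y) : Cell)) →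
        a' ≤ p.1 ∧ p.1 ≤ b' ∧ p.2 = y' := by
      intro p hp
      exact mem_hseg.1 (hsub hp)
    have hay : ((a, y) : Cell) ∈ (Finset.Icc a b).image (fun t => ((t, y) : Cell)) :=
      mem_hseg.2 ⟨le_refl _, le_trans hax hxb, rfl⟩
    have hby : ((b, y) : Cell) ∈ (Finset.Icc a b).image (fun t => ((t, y) : Cell)) :=
      mem_hseg.2 ⟨le_trans hax hxb, le_refl _, rfl⟩
    have hy' : y' = y := ((hmm _ hay).2.2).symm
    subst hy'
    have ha' : a' ≤ a := (hmm _ hay).1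
    have hb' : b ≤ b' := (hmm _ hby).2.1
    have hb'b : b' ≤ b := by
      by_contra h
      push_neg at h
      exact hbout (hI'P (mem_hseg.2 ⟨by show a' ≤ b + 1; linarith, by show b + 1 ≤ b'; linarith, rfl⟩))
    have ha'a : a ≤ a' := by
      by_contra h
      push_neg at h
      exact haout (hI'P (mem_hseg.2 ⟨by show a' ≤ a - 1; linarith, by show a - 1 ≤ b'; linarith, rfl⟩))
    have : a' = a := le_antisymm ha' ha'a
    have hbb : b' = b := le_antisymm hb'b hb'
    rw [this, hbb]
  · exact mem_hseg.2 ⟨hax, hxb, rfl⟩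

/-- Existence of the maximal vertical interval through a cell. -/
lemma exists_maxV (P : Finset Cell) (c : Cell) (hc : c ∈ P) :
    ∃ I, IsMaxVInterval P I ∧ c ∈ I := by
  obtain ⟨x, y⟩ := c
  set R : Finset ℤ := (P.filter (fun p => p.1 = x)).image Prod.snd with hR
  have hxR : y ∈ R := Finset.mem_image.2 ⟨(x, y), Finset.mem_filter.2 ⟨hc, rfl⟩, rfl⟩
  have hmemR : ∀ t : ℤ, (x, t) ∈ P → t ∈ R := fun t ht =>
    Finset.mem_image.2 ⟨(x, t), Finset.mem_filter.2 ⟨ht, rfl⟩, rfl⟩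
  set T : Finset ℤ := R.filter (fun t => y ≤ t ∧ ∀ s ∈ Finset.Icc y t, ((x, s) : Cell) ∈ P)
    with hT
  have hxT : y ∈ T := by
    refine Finset.mem_filter.2 ⟨hxR, le_refl _, ?_⟩
    intro s hs
    rw [Finset.mem_Icc] at hs
    have : s = y := by omega
    rwa [this]
  set T' : Finset ℤ := R.filter (fun t => t ≤ y ∧ ∀ s ∈ Finset.Icc t y, ((x, s) : Cell) ∈ P)
    with hT'
  have hxT' : y ∈ T' := by
    refine Finset.mem_filter.2 ⟨hxR, le_refl _, ?_⟩
    intro s hs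
    rw [Finset.mem_Icc] at hs
    have : s = y := by omega
    rwa [this]
  set b := T.max' ⟨y, hxT⟩ with hb
  set a := T'.min' ⟨y, hxT'⟩ with ha
  have hbT : b ∈ T := T.max'_mem _
  have haT : a ∈ T' := T'.min'_mem _
  have hxb : y ≤ b := (Finset.mem_filter.1 hbT).2.1
  have hax : a ≤ y := (Finset.mem_filter.1 haT).2.1
  have hfill_r : ∀ s ∈ Finset.Icc y b, ((x, s) : Cell) ∈ P := (Finset.mem_filter.1 hbT).2.2
  have hfill_l : ∀ s ∈ Finset.Icc a y, ((x, s) : Cell) ∈ P := (Finset.mem_filter.1 haT).2.2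
  have hbout : ((x, b + 1) : Cell) ∉ P := by
    intro hmem
    have hb1T : b + 1 ∈ T := by
      refine Finset.mem_filter.2 ⟨hmemR _ hmem, by linarith, ?_⟩
      intro s hs
      rw [Finset.mem_Icc] at hs
      rcases lt_or_eq_of_le hs.2 with h | h
      · exact hfill_r s (Finset.mem_Icc.2 ⟨hs.1, by linarith⟩)
      · rwa [h]
    have := Finset.le_max' T _ hb1T
    omega
  have haout : ((x, a - 1) : Cell) ∉ P := by
    intro hmem
    have ha1T : a - 1 ∈ T' := by
      refine Finset.mem_filter.2 ⟨hmemR _ hmem, by linarith, ?_⟩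
      intro s hs
      rw [Finset.mem_Icc] at hs
      rcases lt_or_eq_of_le hs.1 with h | h
      · exact hfill_l s (Finset.mem_Icc.2 ⟨by linarith, hs.2⟩)
      · rw [← h]; exact hmem
    have := Finset.min'_le T' _ ha1T
    omega
  have hfill : ∀ s ∈ Finset.Icc a b, ((x, s) : Cell) ∈ P := by
    intro s hs
    rw [Finset.mem_Icc] at hs
    rcases le_total s y with h | h
    · exact hfill_l s (Finset.mem_Icc.2 ⟨hs.1, h⟩)
    · exact hfill_r s (Finset.mem_Icc.2 ⟨h, hs.2⟩)
  refine ⟨(Finset.Icc a b).image (fun t => (x, t)), ⟨⟨x, a, b, le_trans hax hxb, rfl⟩, ?_, ?_⟩, ?_⟩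
  · intro p hp
    rw [mem_vseg] at hp
    have : p = (x, p.2) := by
      rw [← hp.2.2]
    rw [this]
    exact hfill p.2 (Finset.mem_Icc.2 ⟨hp.1, hp.2.1⟩)
  · rintro I' ⟨x', a', b', hab', rfl⟩ hI'P hsub
    have hmm : ∀ p : Cell, p ∈ (Finset.Icc a b).image (fun t => ((x, t) : Cell)) →
        a' ≤ p.2 ∧ p.2 ≤ b' ∧ p.1 = x' := by
      intro p hp
      exact mem_vseg.1 (hsub hp)
    have hay : ((x, a) : Cell) ∈ (Finset.Icc a b).image (fun t => ((x, t) : Cell)) :=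
      mem_vseg.2 ⟨le_refl _, le_trans hax hxb, rfl⟩
    have hby : ((x, b) : Cell) ∈ (Finset.Icc a b).image (fun t => ((x, t) : Cell)) :=
      mem_vseg.2 ⟨le_trans hax hxb, le_refl _, rfl⟩
    have hy' : x' = x := ((hmm _ hay).2.2).symm
    subst hy'
    have ha' : a' ≤ a := (hmm _ hay).1
    have hb' : b ≤ b' := (hmm _ hby).2.1
    have hb'b : b' ≤ b := by
      by_contra h
      push_neg at h
      exact hbout (hI'P (mem_vseg.2 ⟨by show a' ≤ b + 1; linarith, by show b + 1 ≤ b'; linarith, rfl⟩))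
    have ha'a : a ≤ a' := by
      by_contra h
      push_neg at h
      exact haout (hI'P (mem_vseg.2 ⟨by show a' ≤ a - 1; linarith, by show a - 1 ≤ b'; linarith, rfl⟩))
    have : a' = a := le_antisymm ha' ha'a
    have hbb : b' = b := le_antisymm hb'b hb'
    rw [this, hbb]
  · exact mem_vseg.2 ⟨hax, hxb, rfl⟩


/-- Uniqueness of the maximal horizontal interval through a cell. -/
lemma maxH_unique {P I J : Finset Cell} (hI : IsMaxHInterval P I) (hJ : IsMaxHInterval P J)
    {c : Cell} (hcI : c ∈ I) (hcJ : c ∈ J) : I = J := by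
  obtain ⟨⟨y, a, b, hab, rfl⟩, hIP, hImax⟩ := hI
  obtain ⟨⟨y', a', b', hab', rfl⟩, hJP, hJmax⟩ := hJ
  rw [mem_hseg] at hcI hcJ
  have hy : y' = y := by rw [← hcI.2.2, hcJ.2.2]
  rw [hy] at hcJ hJP hJmax ⊢
  set K := (Finset.Icc (min a a') (max b b')).image (fun t => ((t, y) : Cell)) with hK
  have hKH : IsHSeg K := ⟨y, min a a', max b b', by
    have := hcI.1; have := hcI.2.1; have := hcJ.1; have := hcJ.2.1
    simp only [le_min_iff, min_le_iff, le_max_iff, max_le_iff] <;> omega, rfl⟩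
  have hKP : K ⊆ P := by
    intro p hp
    rw [mem_hseg] at hp
    obtain ⟨h1, h2, h3⟩ := hp
    have hp' : p = (p.1, y) := by rw [← h3]
    rcases le_total p.1 c.1 with h | h
    · rcases min_le_iff.1 (le_refl (min a a')) with _ | _
      all_goals {
        rcases le_total a a' with hmin | hmin
        · rw [min_eq_left hmin] at h1
          rcases le_total p.1 b with hb | hb
          · rw [hp']; exact hIP (mem_hseg.2 ⟨h1, hb, rfl⟩)
          · rw [hp']; exact hJP (mem_hseg.2 ⟨by linarith [hcJ.1], by linarith [hcJ.2.1], rfl⟩)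
        · rw [min_eq_right hmin] at h1
          rcases le_total p.1 b' with hb | hb
          · rw [hp']; exact hJP (mem_hseg.2 ⟨h1, hb, rfl⟩)
          · rw [hp']; exact hIP (mem_hseg.2 ⟨by linarith [hcI.1], by linarith [hcI.2.1], rfl⟩) }
    · rcases le_total b b' with hmax | hmax
      · rw [max_eq_right hmax] at h2
        rcases le_total a' p.1 with ha | ha
        · rw [hp']; exact hJP (mem_hseg.2 ⟨ha, h2, rfl⟩)
        · rw [hp']; exact hIP (mem_hseg.2 ⟨by linarith [hcI.1], by linarith [hcI.2.1], rfl⟩)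
      · rw [max_eq_left hmax] at h2
        rcases le_total a p.1 with ha | ha
        · rw [hp']; exact hIP (mem_hseg.2 ⟨ha, h2, rfl⟩)
        · rw [hp']; exact hJP (mem_hseg.2 ⟨by linarith [hcJ.1], by linarith [hcJ.2.1], rfl⟩)
  have hIK : (Finset.Icc a b).image (fun t => ((t, y) : Cell)) ⊆ K := by
    intro p hp
    rw [mem_hseg] at hp ⊢
    exact ⟨le_trans (min_le_left _ _) hp.1, le_trans hp.2.1 (le_max_left _ _), hp.2.2⟩
  have hJK : (Finset.Icc a' b').image (fun t => ((t, y) : Cell)) ⊆ K := by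
    intro p hp
    rw [mem_hseg] at hp ⊢
    exact ⟨le_trans (min_le_right _ _) hp.1, le_trans hp.2.1 (le_max_right _ _), hp.2.2⟩
  rw [← hImax K hKH hKP hIK, ← hJmax K hKH hKP hJK]

/-- Uniqueness of the maximal vertical interval through a cell. -/
lemma maxV_unique {P I J : Finset Cell} (hI : IsMaxVInterval P I) (hJ : IsMaxVInterval P J)
    {c : Cell} (hcI : c ∈ I) (hcJ : c ∈ J) : I = J := by
  obtain ⟨⟨x, a, b, hab, rfl⟩, hIP, hImax⟩ := hI
  obtain ⟨⟨x', a', b', hab', rfl⟩, hJP, hJmax⟩ := hJ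
  rw [mem_vseg] at hcI hcJ
  have hy : x' = x := by rw [← hcI.2.2, hcJ.2.2]
  rw [hy] at hcJ hJP hJmax ⊢
  set K := (Finset.Icc (min a a') (max b b')).image (fun t => ((x, t) : Cell)) with hK
  have hKH : IsVSeg K := ⟨x, min a a', max b b', by
    have := hcI.1; have := hcI.2.1; have := hcJ.1; have := hcJ.2.1
    simp only [le_min_iff, min_le_iff, le_max_iff, max_le_iff] <;> omega, rfl⟩
  have hKP : K ⊆ P := by
    intro p hp
    rw [mem_vseg] at hp
    obtain ⟨h1, h2, h3⟩ := hp
    have hp' : p = (x, p.2) := by rw [← h3]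
    rcases le_total p.2 c.2 with h | h
    · rcases le_total a a' with hmin | hmin
      · rw [min_eq_left hmin] at h1
        rcases le_total p.2 b with hb | hb
        · rw [hp']; exact hIP (mem_vseg.2 ⟨h1, hb, rfl⟩)
        · rw [hp']; exact hJP (mem_vseg.2 ⟨by linarith [hcJ.1], by linarith [hcJ.2.1], rfl⟩)
      · rw [min_eq_right hmin] at h1
        rcases le_total p.2 b' with hb | hb
        · rw [hp']; exact hJP (mem_vseg.2 ⟨h1, hb, rfl⟩)
        · rw [hp']; exact hIP (mem_vseg.2 ⟨by linarith [hcI.1], by linarith [hcI.2.1], rfl⟩)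
    · rcases le_total b b' with hmax | hmax
      · rw [max_eq_right hmax] at h2
        rcases le_total a' p.2 with ha | ha
        · rw [hp']; exact hJP (mem_vseg.2 ⟨ha, h2, rfl⟩)
        · rw [hp']; exact hIP (mem_vseg.2 ⟨by linarith [hcI.1], by linarith [hcI.2.1], rfl⟩)
      · rw [max_eq_left hmax] at h2
        rcases le_total a p.2 with ha | ha
        · rw [hp']; exact hIP (mem_vseg.2 ⟨ha, h2, rfl⟩)
        · rw [hp']; exact hJP (mem_vseg.2 ⟨by linarith [hcJ.1], by linarith [hcJ.2.1], rfl⟩)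
  have hIK : (Finset.Icc a b).image (fun t => ((x, t) : Cell)) ⊆ K := by
    intro p hp
    rw [mem_vseg] at hp ⊢
    exact ⟨le_trans (min_le_left _ _) hp.1, le_trans hp.2.1 (le_max_left _ _), hp.2.2⟩
  have hJK : (Finset.Icc a' b').image (fun t => ((x, t) : Cell)) ⊆ K := by
    intro p hp
    rw [mem_vseg] at hp ⊢
    exact ⟨le_trans (min_le_right _ _) hp.1, le_trans hp.2.1 (le_max_right _ _), hp.2.2⟩
  rw [← hImax K hKH hKP hIK, ← hJmax K hKH hKP hJK]

/-- A cell of a maximal horizontal interval absorbs its horizontal neighbours in `P`. -/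
lemma maxH_extend {P I : Finset Cell} (hI : IsMaxHInterval P I) {c d : Cell} (hc : c ∈ I)
    (hd : d ∈ P) (hsnd : d.2 = c.2) (hadj : d.1 = c.1 + 1 ∨ c.1 = d.1 + 1) : d ∈ I := by
  obtain ⟨⟨y, a, b, hab, rfl⟩, hIP, hImax⟩ := hI
  rw [mem_hseg] at hc
  have hdy : d.2 = y := by rw [hsnd, hc.2.2]
  have hd' : d = (d.1, y) := by rw [← hdy]
  rcases hadj with h | h
  · by_cases hb : d.1 ≤ b
    · exact mem_hseg.2 ⟨by linarith [hc.1], hb, hdy⟩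
    · push_neg at hb
      have hcb : c.1 = b := by omega
      have := hImax ((Finset.Icc a (b + 1)).image (fun t => ((t, y) : Cell)))
        ⟨y, a, b + 1, by linarith, rfl⟩ ?_ ?_
      · rw [← this]
        exact mem_hseg.2 ⟨by show a ≤ d.1; omega, by show d.1 ≤ b + 1; omega, hdy⟩
      · intro p hp
        rw [mem_hseg] at hp
        have hp' : p = (p.1, y) := by rw [← hp.2.2]
        rcases lt_or_eq_of_le hp.2.1 with hh | hh
        · rw [hp']; exact hIP (mem_hseg.2 ⟨hp.1, by omega, rfl⟩)
        · have hpd : p = d := by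
            rw [hp', hd']
            have : p.1 = d.1 := by omega
            rw [this]
          rwa [hpd]
      · intro p hp
        rw [mem_hseg] at hp ⊢
        exact ⟨hp.1, by omega, hp.2.2⟩
  · by_cases hb : a ≤ d.1
    · exact mem_hseg.2 ⟨hb, by linarith [hc.2.1], hdy⟩
    · push_neg at hb
      have hcb : c.1 = a := by omega
      have := hImax ((Finset.Icc (a - 1) b).image (fun t => ((t, y) : Cell)))
        ⟨y, a - 1, b, by linarith, rfl⟩ ?_ ?_
      · rw [← this]
        exact mem_hseg.2 ⟨by show a - 1 ≤ d.1; omega, by show d.1 ≤ b; omega, hdy⟩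
      · intro p hp
        rw [mem_hseg] at hp
        have hp' : p = (p.1, y) := by rw [← hp.2.2]
        rcases lt_or_eq_of_le hp.1 with hh | hh
        · rw [hp']; exact hIP (mem_hseg.2 ⟨by omega, hp.2.1, rfl⟩)
        · have hpd : p = d := by
            rw [hp', hd']
            have : p.1 = d.1 := by omega
            rw [this]
          rwa [hpd]
      · intro p hp
        rw [mem_hseg] at hp ⊢
        exact ⟨by omega, hp.2.1, hp.2.2⟩


/-- A cell of a maximal vertical interval absorbs its vertical neighbours in `P`. -/
lemma maxV_extend {P I : Finset Cell} (hI : IsMaxVInterval P I) {c d : Cell} (hc : c ∈ I)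
    (hd : d ∈ P) (hfst : d.1 = c.1) (hadj : d.2 = c.2 + 1 ∨ c.2 = d.2 + 1) : d ∈ I := by
  obtain ⟨⟨x, a, b, hab, rfl⟩, hIP, hImax⟩ := hI
  rw [mem_vseg] at hc
  have hdy : d.1 = x := by rw [hfst, hc.2.2]
  have hd' : d = (x, d.2) := by rw [← hdy]
  rcases hadj with h | h
  · by_cases hb : d.2 ≤ b
    · exact mem_vseg.2 ⟨by linarith [hc.1], hb, hdy⟩
    · push_neg at hb
      have hcb : c.2 = b := by omega
      have := hImax ((Finset.Icc a (b + 1)).image (fun t => ((x, t) : Cell)))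
        ⟨x, a, b + 1, by linarith, rfl⟩ ?_ ?_
      · rw [← this]
        exact mem_vseg.2 ⟨by show a ≤ d.2; omega, by show d.2 ≤ b + 1; omega, hdy⟩
      · intro p hp
        rw [mem_vseg] at hp
        have hp' : p = (x, p.2) := by rw [← hp.2.2]
        rcases lt_or_eq_of_le hp.2.1 with hh | hh
        · rw [hp']; exact hIP (mem_vseg.2 ⟨hp.1, by omega, rfl⟩)
        · have hpd : p = d := by
            rw [hp', hd']
            have : p.2 = d.2 := by omega
            rw [this]
          rwa [hpd]
      · intro p hp
        rw [mem_vseg] at hp ⊢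
        exact ⟨hp.1, by omega, hp.2.2⟩
  · by_cases hb : a ≤ d.2
    · exact mem_vseg.2 ⟨hb, by linarith [hc.2.1], hdy⟩
    · push_neg at hb
      have hcb : c.2 = a := by omega
      have := hImax ((Finset.Icc (a - 1) b).image (fun t => ((x, t) : Cell)))
        ⟨x, a - 1, b, by linarith, rfl⟩ ?_ ?_
      · rw [← this]
        exact mem_vseg.2 ⟨by show a - 1 ≤ d.2; omega, by show d.2 ≤ b; omega, hdy⟩
      · intro p hp
        rw [mem_vseg] at hp
        have hp' : p = (x, p.2) := by rw [← hp.2.2]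
        rcases lt_or_eq_of_le hp.1 with hh | hh
        · rw [hp']; exact hIP (mem_vseg.2 ⟨by omega, hp.2.1, rfl⟩)
        · have hpd : p = d := by
            rw [hp', hd']
            have : p.2 = d.2 := by omega
            rw [this]
          rwa [hpd]
      · intro p hp
        rw [mem_vseg] at hp ⊢
        exact ⟨by omega, hp.2.1, hp.2.2⟩

/-- Adjacent cells of `P` share a maximal interval. -/
lemma adj_share {P : Finset Cell} {c d : Cell} (hc : c ∈ P) (hd : d ∈ P) (h : Adjacent c d) :
    ∃ K, IsMaxInterval P K ∧ c ∈ K ∧ d ∈ K := by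
  rcases h with ⟨h1, h2⟩ | ⟨h1, h2⟩
  · obtain ⟨I, hI, hcI⟩ := exists_maxV P c hc
    exact ⟨I, Or.inr hI, hcI, maxV_extend hI hcI hd h1.symm (by omega)⟩
  · obtain ⟨I, hI, hcI⟩ := exists_maxH P c hc
    exact ⟨I, Or.inl hI, hcI, maxH_extend hI hcI hd h1.symm (by omega)⟩


/-- An attacker of `c` lies in the maximal horizontal or vertical interval of `c`. -/
lemma attacks_mem {P H V : Finset Cell} {f c : Cell} (h : Attacks P f c)
    (hH : IsMaxHInterval P H) (hcH : c ∈ H) (hV : IsMaxVInterval P V) (hcV : c ∈ V) :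
    f ∈ H ∨ f ∈ V := by
  obtain ⟨hne, I, hI, hfI, hcI⟩ := h
  rcases hI with hI | hI
  · exact Or.inl ((maxH_unique hI hH hcI hcH) ▸ hfI)
  · exact Or.inr ((maxV_unique hI hV hcI hcV) ▸ hfI)

/-- A rook set meets each maximal interval in at most one cell. -/
lemma rook_unique_in_interval {P F I : Finset Cell} (hF : IsRookSet P F)
    (hI : IsMaxInterval P I) {e f : Cell} (he : e ∈ F) (heI : e ∈ I) (hf : f ∈ F)
    (hfI : f ∈ I) : e = f := by
  by_contra hne
  exact hF.2 e he f hf ⟨hne, I, hI, heI, hfI⟩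

/-- Every rook set extends to a maximal one. -/
lemma exists_max_superset {P : Finset Cell} {F : Finset Cell} (hF : IsRookSet P F) :
    ∃ G, IsMaxRookSet P G ∧ F ⊆ G := by
  classical
  have H : ∀ n (F : Finset Cell), IsRookSet P F → P.card - F.card ≤ n →
      ∃ G, IsMaxRookSet P G ∧ F ⊆ G := by
    intro n
    induction n with
    | zero =>
      intro F hF hn
      have hFP : F = P := Finset.eq_of_subset_of_card_le hF.1 (by omega)
      refine ⟨F, ⟨hF, ?_⟩, le_refl _⟩
      intro G hG hFG
      exact Finset.eq_of_subset_of_card_le (hFP ▸ hG.1) (Finset.card_le_card hFG)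
    | succ n ih =>
      intro F hF hn
      by_cases hmax : IsMaxRookSet P F
      · exact ⟨F, hmax, le_refl _⟩
      · have : ∃ G, IsRookSet P G ∧ F ⊆ G ∧ G ≠ F := by
          by_contra hcon
          push_neg at hcon
          exact hmax ⟨hF, fun G hG hFG => hcon G hG hFG⟩
        obtain ⟨G, hG, hFG, hne⟩ := this
        have hlt : F.card < G.card :=
          Finset.card_lt_card (Finset.ssubset_iff_subset_ne.2 ⟨hFG, fun h => hne h.symm⟩)
        have hGP : G.card ≤ P.card := Finset.card_le_card hG.1
        obtain ⟨G', hG', hGG'⟩ := ih G hG (by omega)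
        exact ⟨G', hG', hFG.trans hGG'⟩
  exact H (P.card - F.card) F hF (le_refl _)

/-- Each cell outside a maximal rook set is attacked by some member. -/
lemma exists_attacker {P F : Finset Cell} (hF : IsMaxRookSet P F) {c : Cell} (hc : c ∈ P)
    (hcF : c ∉ F) : ∃ g ∈ F, Attacks P g c := by
  by_contra h
  push_neg at h
  have hins : IsRookSet P (insert c F) :=
    rook_insert hF.1 hc (fun g hg ha => h g hg (attacks_symm ha))
  have := hF.2 _ hins (Finset.subset_insert _ _)
  exact hcF (this ▸ Finset.mem_insert_self c F)

/-- Under equimatchability, any rook set as large as a maximal one is maximal. -/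
lemma card_maximal {P : Finset Cell}
    (hEq : ∀ F G, IsMaxRookSet P F → IsMaxRookSet P G → F.card = G.card)
    {F G : Finset Cell} (hF : IsMaxRookSet P F) (hG : IsRookSet P G)
    (hcard : F.card ≤ G.card) : IsMaxRookSet P G := by
  obtain ⟨G', hG', hGG'⟩ := exists_max_superset hG
  have h1 : G'.card = F.card := hEq G' F hG' hF
  have h2 : G = G' := Finset.eq_of_subset_of_card_le hGG' (by omega)
  rwa [h2]

noncomputable def hInt (P : Finset Cell) (c : Cell) : Finset Cell :=
  if h : c ∈ P then (exists_maxH P c h).choose else ∅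

lemma hInt_spec {P : Finset Cell} {c : Cell} (h : c ∈ P) :
    IsMaxHInterval P (hInt P c) ∧ c ∈ hInt P c := by
  rw [hInt, dif_pos h]
  exact (exists_maxH P c h).choose_spec

/-- If some maximal rook set misses a maximal horizontal interval, then every maximal rook
set misses some maximal horizontal interval. -/
lemma exists_missed_H {P : Finset Cell}
    (hEq : ∀ F G, IsMaxRookSet P F → IsMaxRookSet P G → F.card = G.card)
    {F₁ u : Finset Cell} (hF₁ : IsMaxRookSet P F₁) (hu : IsMaxHInterval P u)
    (h1 : F₁ ∩ u = ∅) {F₂ : Finset Cell} (hF₂ : IsMaxRookSet P F₂) :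
    ∃ u', IsMaxHInterval P u' ∧ F₂ ∩ u' = ∅ := by
  classical
  set H : Finset (Finset Cell) := P.powerset.filter (fun I => IsMaxHInterval P I) with hH
  have himg : ∀ F : Finset Cell, IsMaxRookSet P F →
      (F.image (hInt P)).card = F.card ∧ F.image (hInt P) ⊆ H := by
    intro F hF
    constructor
    · apply Finset.card_image_of_injOn
      intro a ha b hb hab
      have haP : a ∈ P := hF.1.1 ha
      have hbP : b ∈ P := hF.1.1 hb
      exact rook_unique_in_interval hF.1 (Or.inl (hInt_spec haP).1) ha (hInt_spec haP).2 hb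
        (hab ▸ (hInt_spec hbP).2)
    · intro I hI
      obtain ⟨a, ha, rfl⟩ := Finset.mem_image.1 hI
      have haP : a ∈ P := hF.1.1 ha
      exact Finset.mem_filter.2 ⟨Finset.mem_powerset.2 (hInt_spec haP).1.2.1, (hInt_spec haP).1⟩
  have huH : u ∈ H := Finset.mem_filter.2 ⟨Finset.mem_powerset.2 hu.2.1, hu⟩
  have hu_not : u ∉ F₁.image (hInt P) := by
    intro hmem
    obtain ⟨a, ha, hae⟩ := Finset.mem_image.1 hmem
    have haP : a ∈ P := hF₁.1.1 ha
    have : a ∈ F₁ ∩ u := Finset.mem_inter.2 ⟨ha, hae ▸ (hInt_spec haP).2⟩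
    rw [h1] at this
    exact absurd this (Finset.notMem_empty a)
  have hsub1 : F₁.image (hInt P) ⊆ H.erase u :=
    fun I hI => Finset.mem_erase.2 ⟨fun h => hu_not (h ▸ hI), (himg F₁ hF₁).2 hI⟩
  have hlt : (F₂.image (hInt P)).card < H.card := by
    have h1' := (himg F₁ hF₁).1
    have h2' := (himg F₂ hF₂).1
    have := Finset.card_le_card hsub1
    have herase := Finset.card_erase_of_mem huH
    have hHpos : 0 < H.card := Finset.card_pos.2 ⟨u, huH⟩
    have := hEq F₁ F₂ hF₁ hF₂
    omega
  have hex : ∃ u' ∈ H, u' ∉ F₂.image (hInt P) := by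
    by_contra hcon
    push_neg at hcon
    have hsub : H ⊆ F₂.image (hInt P) := fun x hx => hcon x hx
    exact absurd (Finset.card_le_card hsub) (by omega)
  obtain ⟨u', hu'H, hu'not⟩ := hex
  have hu' : IsMaxHInterval P u' := (Finset.mem_filter.1 hu'H).2
  refine ⟨u', hu', ?_⟩
  rw [Finset.eq_empty_iff_forall_notMem]
  intro a ha
  rw [Finset.mem_inter] at ha
  have haP : a ∈ P := hF₂.1.1 ha.1
  have : hInt P a = u' := maxH_unique (hInt_spec haP).1 hu' (hInt_spec haP).2 ha.2
  exact hu'not (Finset.mem_image.2 ⟨a, ha.1, this⟩)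

/-- A path of cells in `P` produces a walk of maximal intervals. -/
lemma path_to_walk {P : Finset Cell} {c d : Cell}
    (h : Relation.ReflTransGen (fun a b => Adjacent a b ∧ a ∈ P ∧ b ∈ P) c d) :
    ∀ I, IsMaxInterval P I → c ∈ I → ∀ J, IsMaxInterval P J → d ∈ J →
      ∃ (k : ℕ) (f : ℕ → Finset Cell), f 0 = I ∧ f k = J ∧
        (∀ i ≤ k, IsMaxInterval P (f i)) ∧ (∀ i < k, ((f i) ∩ (f (i+1))).Nonempty) := by
  induction h using Relation.ReflTransGen.head_induction_on with
  | refl =>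
    intro I hI hcI J hJ hdJ
    refine ⟨1, fun i => if i = 0 then I else J, by simp, by simp, ?_, ?_⟩
    · intro i _
      by_cases hi : i = 0 <;> simp [hi, hI, hJ]
    · intro i hi
      have hi0 : i = 0 := by omega
      subst hi0
      refine ⟨d, Finset.mem_inter.2 ⟨?_, ?_⟩⟩ <;> simp [hcI, hdJ]
  | head hab _ ih =>
    intro I hI haI J hJ hdJ
    obtain ⟨K, hK, haK, hbK⟩ := adj_share hab.2.1 hab.2.2 hab.1
    obtain ⟨k, f, hf0, hfk, hmax, hsh⟩ := ih K hK hbK J hJ hdJ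
    refine ⟨k + 1, fun i => if i = 0 then I else f (i - 1), by simp, ?_, ?_, ?_⟩
    · simp only [Nat.succ_ne_zero, if_neg, Nat.add_sub_cancel]
      exact hfk
    · intro i hi
      by_cases h0 : i = 0
      · simp [h0, hI]
      · simp only [if_neg h0]
        exact hmax (i - 1) (by omega)
    · intro i hi
      by_cases h0 : i = 0
      · subst h0
        simp only [if_pos rfl, if_neg one_ne_zero]
        rw [hf0]
        exact ⟨_, Finset.mem_inter.2 ⟨haI, haK⟩⟩
      · simp only [if_neg h0, if_neg (Nat.succ_ne_zero i)]
        have : i - 1 + 1 = i + 1 - 1 := by omega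
        rw [← this]
        exact hsh (i - 1) (by omega)


/-- Main induction: under equimatchability there is no maximal rook set missing both a
maximal horizontal interval and a maximal vertical interval joined by a walk. -/
lemma main_ind {P : Finset Cell}
    (hEq : ∀ F G, IsMaxRookSet P F → IsMaxRookSet P G → F.card = G.card) :
    ∀ k : ℕ, ∀ F : Finset Cell, ∀ f : ℕ → Finset Cell,
      IsMaxRookSet P F →
      (∀ i, i ≤ k → IsMaxInterval P (f i)) →
      (∀ i, i < k → ((f i) ∩ (f (i+1))).Nonempty) →
      IsMaxHInterval P (f 0) → IsMaxVInterval P (f k) →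
      F ∩ f 0 = ∅ → F ∩ f k = ∅ → False := by
  intro k
  induction k using Nat.strong_induction_on with
  | _ k ih =>
  intro F f hF hmax hsh h0H hkV hF0 hFk
  have hnot : ∀ {F' X : Finset Cell}, F' ∩ X = ∅ → ∀ {t : Cell}, t ∈ F' → t ∈ X → False := by
    intro F' X hFX t ht htX
    have : t ∈ F' ∩ X := Finset.mem_inter.2 ⟨ht, htX⟩
    rw [hFX] at this
    exact absurd this (Finset.notMem_empty t)
  by_cases hk0 : k = 0
  · subst hk0
    obtain ⟨c, hc⟩ := hseg_nonempty h0H.1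
    have hcP : c ∈ P := h0H.2.1 hc
    have hcF : c ∉ F := fun h => hnot hF0 h hc
    obtain ⟨g, hgF, hgatt⟩ := exists_attacker hF hcP hcF
    rcases attacks_mem hgatt h0H hc hkV hc with h | h
    · exact hnot hF0 hgF h
    · exact hnot hFk hgF h
  by_cases hk1 : k = 1
  · subst hk1
    obtain ⟨c, hc⟩ := hsh 0 (by omega)
    rw [Finset.mem_inter] at hc
    have hcP : c ∈ P := h0H.2.1 hc.1
    have hcF : c ∉ F := fun h => hnot hF0 h hc.1
    obtain ⟨g, hgF, hgatt⟩ := exists_attacker hF hcP hcF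
    rcases attacks_mem hgatt h0H hc.1 hkV hc.2 with h | h
    · exact hnot hF0 hgF h
    · exact hnot hFk hgF h
  have hk2 : 2 ≤ k := by omega
  obtain ⟨c₀, hc₀⟩ := hsh 0 (by omega)
  rw [Finset.mem_inter] at hc₀
  rcases hmax 1 (by omega) with h1H | h1V
  · -- `f 1` is horizontal, hence equals `f 0`; drop it.
    have he : f 1 = f 0 := maxH_unique h1H h0H hc₀.2 hc₀.1
    refine ih (k - 1) (by omega) F (fun i => f (i + 1)) hF ?_ ?_ ?_ ?_ ?_ ?_
    · intro i hi; exact hmax (i + 1) (by omega)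
    · intro i hi; exact hsh (i + 1) (by omega)
    · show IsMaxHInterval P (f 1); rw [he]; exact h0H
    · show IsMaxVInterval P (f (k - 1 + 1)); rw [show k - 1 + 1 = k by omega]; exact hkV
    · show F ∩ f 1 = ∅; rw [he]; exact hF0
    · show F ∩ f (k - 1 + 1) = ∅; rw [show k - 1 + 1 = k by omega]; exact hFk
  -- `f 1` is vertical
  by_cases hF1 : F ∩ f 1 = ∅
  · -- the pair `(f 0, f 1)` already gives a contradiction via the length-1 walk
    refine ih 1 (by omega) F (fun i => if i = 0 then f 0 else f 1) hF ?_ ?_ ?_ ?_ ?_ ?_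
    · intro i hi
      by_cases h : i = 0
      · simp only [if_pos h]; exact hmax 0 (by omega)
      · simp only [if_neg h]; exact hmax 1 (by omega)
    · intro i hi
      have h0 : i = 0 := by omega
      subst h0
      refine ⟨c₀, Finset.mem_inter.2 ⟨?_, ?_⟩⟩ <;> simp [hc₀.1, hc₀.2]
    · simpa using h0H
    · simpa using h1V
    · simpa using hF0
    · simpa using hF1
  obtain ⟨e₁, he₁⟩ := Finset.nonempty_iff_ne_empty.2 hF1
  rw [Finset.mem_inter] at he₁
  obtain ⟨c₁₂, hc₁₂⟩ := hsh 1 (by omega)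
  rw [Finset.mem_inter] at hc₁₂
  rcases hmax 2 (by omega) with h2H | h2V
  swap
  · -- `f 2` is vertical, hence equals `f 1`; drop it.
    have he : f 2 = f 1 := maxV_unique h2V h1V hc₁₂.2 hc₁₂.1
    refine ih (k - 1) (by omega) F (fun i => if i = 0 then f 0 else f (i + 1)) hF ?_ ?_ ?_ ?_ ?_ ?_
    · intro i hi
      by_cases h : i = 0
      · simp only [if_pos h]; exact hmax 0 (by omega)
      · simp only [if_neg h]; exact hmax (i + 1) (by omega)
    · intro i hi
      by_cases h : i = 0
      · subst h
        simp only [if_pos rfl, if_neg one_ne_zero]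
        refine ⟨c₀, Finset.mem_inter.2 ⟨hc₀.1, ?_⟩⟩
        rw [he]; exact hc₀.2
      · simp only [if_neg h, if_neg (Nat.succ_ne_zero i)]
        exact hsh (i + 1) (by omega)
    · simpa using h0H
    · simp only [if_neg (by omega : ¬ (k - 1 = 0))]
      rw [show k - 1 + 1 = k by omega]; exact hkV
    · simpa using hF0
    · simp only [if_neg (by omega : ¬ (k - 1 = 0))]
      rw [show k - 1 + 1 = k by omega]; exact hFk
  -- `f 2` is horizontal
  by_cases hF2 : F ∩ f 2 = ∅
  · -- drop the first two steps of the walk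
    refine ih (k - 2) (by omega) F (fun i => f (i + 2)) hF ?_ ?_ h2H ?_ hF2 ?_
    · intro i hi; exact hmax (i + 2) (by omega)
    · intro i hi; exact hsh (i + 2) (by omega)
    · show IsMaxVInterval P (f (k - 2 + 2))
      rw [show k - 2 + 2 = k by omega]; exact hkV
    · show F ∩ f (k - 2 + 2) = ∅
      rw [show k - 2 + 2 = k by omega]; exact hFk
  obtain ⟨e₂, he₂⟩ := Finset.nonempty_iff_ne_empty.2 hF2
  rw [Finset.mem_inter] at he₂
  have hc₀F : c₀ ∉ F := fun h => hnot hF0 h hc₀.1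
  have hc₀P : c₀ ∈ P := h0H.2.1 hc₀.1
  have hc₁₂P : c₁₂ ∈ P := h2H.2.1 hc₁₂.2
  have hne20 : f 2 ≠ f 0 := fun h => hnot hF0 (he₂.1) (h ▸ he₂.2)
  have hne1k : f 1 ≠ f k := fun h => hnot hFk (he₁.1) (h ▸ he₁.2)
  have hc₀2 : c₀ ∉ f 2 := fun h => hne20 (maxH_unique h2H h0H h hc₀.1)
  have hc₀k : c₀ ∉ f k := fun h => hne1k (maxV_unique h1V hkV hc₀.2 h)
  by_cases hee : e₁ = e₂
  · -- Case 3: the cell of `F` in `f 1` also lies in `f 2`. Swap `e₁` for `c₀`.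
    have he₁2 : e₁ ∈ f 2 := hee ▸ he₂.2
    have hc₀e₁ : c₀ ≠ e₁ := fun h => hc₀F (h ▸ he₁.1)
    set F' := insert c₀ (F.erase e₁) with hF'def
    have hF'rook : IsRookSet P F' := by
      refine rook_insert (rook_subset hF.1 (Finset.erase_subset _ _)) hc₀P ?_
      intro g hg hatt
      have hgF : g ∈ F := Finset.mem_of_mem_erase hg
      rcases attacks_mem (attacks_symm hatt) h0H hc₀.1 h1V hc₀.2 with h | h
      · exact hnot hF0 hgF h
      · exact (Finset.mem_erase.1 hg).1
          (rook_unique_in_interval hF.1 (Or.inr h1V) hgF h he₁.1 he₁.2)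
    have hc₀erase : c₀ ∉ F.erase e₁ := fun h => hc₀F (Finset.mem_of_mem_erase h)
    have hF'card : F'.card = F.card := by
      rw [hF'def, Finset.card_insert_of_notMem hc₀erase, Finset.card_erase_of_mem he₁.1]
      have : 1 ≤ F.card := Finset.card_pos.2 ⟨e₁, he₁.1⟩
      omega
    have hF'max : IsMaxRookSet P F' := card_maximal hEq hF hF'rook (le_of_eq hF'card.symm)
    have hF'2 : F' ∩ f 2 = ∅ := by
      rw [Finset.eq_empty_iff_forall_notMem]
      intro t ht
      rw [Finset.mem_inter, hF'def, Finset.mem_insert] at ht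
      rcases ht.1 with rfl | htF
      · exact hc₀2 ht.2
      · exact (Finset.mem_erase.1 htF).1
          (rook_unique_in_interval hF.1 (Or.inl h2H) (Finset.mem_of_mem_erase htF) ht.2 he₁.1
            he₁2)
    have hF'k : F' ∩ f k = ∅ := by
      rw [Finset.eq_empty_iff_forall_notMem]
      intro t ht
      rw [Finset.mem_inter, hF'def, Finset.mem_insert] at ht
      rcases ht.1 with rfl | htF
      · exact hc₀k ht.2
      · exact hnot hFk (Finset.mem_of_mem_erase htF) ht.2
    refine ih (k - 2) (by omega) F' (fun i => f (i + 2)) hF'max ?_ ?_ h2H ?_ hF'2 ?_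
    · intro i hi; exact hmax (i + 2) (by omega)
    · intro i hi; exact hsh (i + 2) (by omega)
    · show IsMaxVInterval P (f (k - 2 + 2))
      rw [show k - 2 + 2 = k by omega]; exact hkV
    · show F' ∩ f (k - 2 + 2) = ∅
      rw [show k - 2 + 2 = k by omega]; exact hF'k
  -- Case 4: distinct cells of `F` in `f 1` and `f 2`.
  have he₂e₁ : e₂ ≠ e₁ := fun h => hee h.symm
  have hFcard2 : 2 ≤ F.card := by
    have hsub : ({e₁, e₂} : Finset Cell) ⊆ F := by
      intro t ht
      rcases Finset.mem_insert.1 ht with rfl | ht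
      · exact he₁.1
      · rw [Finset.mem_singleton.1 ht]; exact he₂.1
    calc 2 = ({e₁, e₂} : Finset Cell).card := (Finset.card_pair hee).symm
      _ ≤ F.card := Finset.card_le_card hsub
  have hc₁₂F : c₁₂ ∉ F := by
    intro h
    exact hee ((rook_unique_in_interval hF.1 (Or.inr h1V) he₁.1 he₁.2 h hc₁₂.1).trans
      (rook_unique_in_interval hF.1 (Or.inl h2H) h hc₁₂.2 he₂.1 he₂.2))
  have he₂erase : e₂ ∈ F.erase e₁ := Finset.mem_erase.2 ⟨he₂e₁, he₂.1⟩
  have hc₁₂ee : c₁₂ ∉ (F.erase e₁).erase e₂ :=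
    fun h => hc₁₂F (Finset.mem_of_mem_erase (Finset.mem_of_mem_erase h))
  set N := insert c₁₂ ((F.erase e₁).erase e₂) with hNdef
  have hNrook : IsRookSet P N := by
    refine rook_insert (rook_subset hF.1 ((Finset.erase_subset _ _).trans
      (Finset.erase_subset _ _))) hc₁₂P ?_
    intro g hg hatt
    have hgF : g ∈ F := Finset.mem_of_mem_erase (Finset.mem_of_mem_erase hg)
    rcases attacks_mem (attacks_symm hatt) h2H hc₁₂.2 h1V hc₁₂.1 with h | h
    · exact (Finset.mem_erase.1 hg).1
        (rook_unique_in_interval hF.1 (Or.inl h2H) hgF h he₂.1 he₂.2)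
    · exact (Finset.mem_erase.1 (Finset.mem_of_mem_erase hg)).1
        (rook_unique_in_interval hF.1 (Or.inr h1V) hgF h he₁.1 he₁.2)
  have hNcard : N.card + 1 = F.card := by
    rw [hNdef, Finset.card_insert_of_notMem hc₁₂ee, Finset.card_erase_of_mem he₂erase,
      Finset.card_erase_of_mem he₁.1]
    omega
  have hNnotmax : ¬ IsMaxRookSet P N := by
    intro h
    have := hEq N F h hF
    omega
  have hexG : ∃ G, IsRookSet P G ∧ N ⊆ G ∧ G ≠ N := by
    by_contra hcon
    push_neg at hcon
    exact hNnotmax ⟨hNrook, fun G hG hNG => hcon G hG hNG⟩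
  obtain ⟨G, hG, hNG, hGne⟩ := hexG
  have hexz : ∃ z ∈ G, z ∉ N := by
    by_contra hcon
    push_neg at hcon
    exact hGne (Finset.Subset.antisymm (fun t ht => hcon t ht) hNG)
  obtain ⟨z, hzG, hzN⟩ := hexz
  have hzP : z ∈ P := hG.1 hzG
  have hz_noatt : ∀ t ∈ N, ¬ Attacks P z t := fun t ht => hG.2 z hzG t (hNG ht)
  have hzc₁₂ : ¬ Attacks P z c₁₂ := hz_noatt c₁₂ (Finset.mem_insert_self _ _)
  have hzc₁₂ne : z ≠ c₁₂ := fun h => hzN (h ▸ Finset.mem_insert_self _ _)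
  have hz1 : z ∉ f 1 := fun h => hzc₁₂ ⟨hzc₁₂ne, f 1, Or.inr h1V, h, hc₁₂.1⟩
  have hz2 : z ∉ f 2 := fun h => hzc₁₂ ⟨hzc₁₂ne, f 2, Or.inl h2H, h, hc₁₂.2⟩
  have hzF : z ∉ F := by
    intro hzF
    by_cases hz1' : z = e₁
    · exact hz1 (hz1' ▸ he₁.2)
    by_cases hz2' : z = e₂
    · exact hz2 (hz2' ▸ he₂.2)
    exact hzN (Finset.mem_insert_of_mem (Finset.mem_erase.2 ⟨hz2', Finset.mem_erase.2
      ⟨hz1', hzF⟩⟩))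
  obtain ⟨g₀, hg₀F, hg₀att⟩ := exists_attacker hF hzP hzF
  have hAtt : Attacks P e₁ z ∨ Attacks P e₂ z := by
    by_cases hg1 : g₀ = e₁
    · exact Or.inl (hg1 ▸ hg₀att)
    by_cases hg2 : g₀ = e₂
    · exact Or.inr (hg2 ▸ hg₀att)
    exfalso
    exact hz_noatt g₀ (Finset.mem_insert_of_mem (Finset.mem_erase.2 ⟨hg2, Finset.mem_erase.2
      ⟨hg1, hg₀F⟩⟩)) (attacks_symm hg₀att)
  by_cases hA1 : Attacks P e₁ z
  · obtain ⟨hne1z, I₁, hI₁, he₁I, hzI₁⟩ := hA1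
    have ht₁ : IsMaxHInterval P I₁ := by
      rcases hI₁ with h | h
      · exact h
      · exact absurd ((maxV_unique h h1V he₁I he₁.2) ▸ hzI₁) hz1
    have ht₁0 : I₁ ≠ f 0 := fun h => hnot hF0 he₁.1 (h ▸ he₁I)
    have hz0 : z ∉ f 0 := fun h => ht₁0 (maxH_unique ht₁ h0H hzI₁ h)
    by_cases hA2 : Attacks P e₂ z
    · obtain ⟨hne2z, I₂, hI₂, he₂I, hzI₂⟩ := hA2
      have ht₂ : IsMaxVInterval P I₂ := by
        rcases hI₂ with h | h
        · exact absurd ((maxH_unique h h2H he₂I he₂.2) ▸ hzI₂) hz2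
        · exact h
      have ht₂k : I₂ ≠ f k := fun h => hnot hFk he₂.1 (h ▸ he₂I)
      have hzk : z ∉ f k := fun h => ht₂k (maxV_unique ht₂ hkV hzI₂ h)
      -- surgery: `F₄ = F - e₁ - e₂ + c₀ + z`, which misses `f 2` and `f k`.
      have hinner : IsRookSet P (insert c₀ ((F.erase e₁).erase e₂)) := by
        refine rook_insert (rook_subset hF.1 ((Finset.erase_subset _ _).trans
          (Finset.erase_subset _ _))) hc₀P ?_
        intro g hg hatt
        have hgF : g ∈ F := Finset.mem_of_mem_erase (Finset.mem_of_mem_erase hg)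
        rcases attacks_mem (attacks_symm hatt) h0H hc₀.1 h1V hc₀.2 with h | h
        · exact hnot hF0 hgF h
        · exact (Finset.mem_erase.1 (Finset.mem_of_mem_erase hg)).1
            (rook_unique_in_interval hF.1 (Or.inr h1V) hgF h he₁.1 he₁.2)
      have hzc₀ : z ≠ c₀ := fun h => hz1 (h ▸ hc₀.2)
      have hF₄rook : IsRookSet P (insert z (insert c₀ ((F.erase e₁).erase e₂))) := by
        refine rook_insert hinner hzP ?_
        intro g hg hatt
        rw [Finset.mem_insert] at hg
        rcases hg with rfl | hg
        · rcases attacks_mem hatt h0H hc₀.1 h1V hc₀.2 with h | h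
          · exact hz0 h
          · exact hz1 h
        · have hgF : g ∈ F := Finset.mem_of_mem_erase (Finset.mem_of_mem_erase hg)
          rcases attacks_mem (attacks_symm hatt) ht₁ hzI₁ ht₂ hzI₂ with h | h
          · exact (Finset.mem_erase.1 (Finset.mem_of_mem_erase hg)).1
              (rook_unique_in_interval hF.1 (Or.inl ht₁) hgF h he₁.1 he₁I)
          · exact (Finset.mem_erase.1 hg).1
              (rook_unique_in_interval hF.1 (Or.inr ht₂) hgF h he₂.1 he₂I)
      have hzinner : z ∉ insert c₀ ((F.erase e₁).erase e₂) := by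
        rw [Finset.mem_insert]
        rintro (rfl | h)
        · exact hzc₀ rfl
        · exact hzF (Finset.mem_of_mem_erase (Finset.mem_of_mem_erase h))
      have hc₀ee : c₀ ∉ (F.erase e₁).erase e₂ :=
        fun h => hc₀F (Finset.mem_of_mem_erase (Finset.mem_of_mem_erase h))
      have hF₄card : (insert z (insert c₀ ((F.erase e₁).erase e₂))).card = F.card := by
        rw [Finset.card_insert_of_notMem hzinner, Finset.card_insert_of_notMem hc₀ee,
          Finset.card_erase_of_mem he₂erase, Finset.card_erase_of_mem he₁.1]
        omega
      have hF₄max : IsMaxRookSet P (insert z (insert c₀ ((F.erase e₁).erase e₂))) :=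
        card_maximal hEq hF hF₄rook (le_of_eq hF₄card.symm)
      have hF₄2 : (insert z (insert c₀ ((F.erase e₁).erase e₂))) ∩ f 2 = ∅ := by
        rw [Finset.eq_empty_iff_forall_notMem]
        intro t ht
        rw [Finset.mem_inter, Finset.mem_insert, Finset.mem_insert] at ht
        rcases ht.1 with rfl | rfl | htF
        · exact hz2 ht.2
        · exact hc₀2 ht.2
        · exact (Finset.mem_erase.1 htF).1 (rook_unique_in_interval hF.1 (Or.inl h2H)
            (Finset.mem_of_mem_erase (Finset.mem_of_mem_erase htF)) ht.2 he₂.1 he₂.2)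
      have hF₄k : (insert z (insert c₀ ((F.erase e₁).erase e₂))) ∩ f k = ∅ := by
        rw [Finset.eq_empty_iff_forall_notMem]
        intro t ht
        rw [Finset.mem_inter, Finset.mem_insert, Finset.mem_insert] at ht
        rcases ht.1 with rfl | rfl | htF
        · exact hzk ht.2
        · exact hc₀k ht.2
        · exact hnot hFk (Finset.mem_of_mem_erase (Finset.mem_of_mem_erase htF)) ht.2
      refine ih (k - 2) (by omega) _ (fun i => f (i + 2)) hF₄max ?_ ?_ h2H ?_ hF₄2 ?_
      · intro i hi; exact hmax (i + 2) (by omega)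
      · intro i hi; exact hsh (i + 2) (by omega)
      · show IsMaxVInterval P (f (k - 2 + 2))
        rw [show k - 2 + 2 = k by omega]; exact hkV
      · show insert z (insert c₀ ((F.erase e₁).erase e₂)) ∩ f (k - 2 + 2) = ∅
        rw [show k - 2 + 2 = k by omega]; exact hF₄k
    · -- `z` attacks only `e₁`: surgery `F₂' = F - e₁ + z` misses `f 0` and `f 1`.
      obtain ⟨Vz, hVz, hzVz⟩ := exists_maxV P z hzP
      have hF₂rook : IsRookSet P (insert z (F.erase e₁)) := by
        refine rook_insert (rook_subset hF.1 (Finset.erase_subset _ _)) hzP ?_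
        intro g hg hatt
        have hgF : g ∈ F := Finset.mem_of_mem_erase hg
        rcases attacks_mem (attacks_symm hatt) ht₁ hzI₁ hVz hzVz with h | h
        · exact (Finset.mem_erase.1 hg).1
            (rook_unique_in_interval hF.1 (Or.inl ht₁) hgF h he₁.1 he₁I)
        · by_cases hge2 : g = e₂
          · subst hge2
            exact hA2 ⟨fun hh => hzF (hh ▸ hgF), Vz, Or.inr hVz, h, hzVz⟩
          · by_cases hge1 : g = e₁
            · exact (Finset.mem_erase.1 hg).1 hge1
            · exact hz_noatt g (Finset.mem_insert_of_mem (Finset.mem_erase.2 ⟨hge2,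
                Finset.mem_erase.2 ⟨hge1, hgF⟩⟩)) hatt
      have hzerase : z ∉ F.erase e₁ := fun h => hzF (Finset.mem_of_mem_erase h)
      have hF₂card : (insert z (F.erase e₁)).card = F.card := by
        rw [Finset.card_insert_of_notMem hzerase, Finset.card_erase_of_mem he₁.1]
        omega
      have hF₂max : IsMaxRookSet P (insert z (F.erase e₁)) :=
        card_maximal hEq hF hF₂rook (le_of_eq hF₂card.symm)
      have hF₂0 : (insert z (F.erase e₁)) ∩ f 0 = ∅ := by
        rw [Finset.eq_empty_iff_forall_notMem]
        intro t ht
        rw [Finset.mem_inter, Finset.mem_insert] at ht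
        rcases ht.1 with rfl | htF
        · exact hz0 ht.2
        · exact hnot hF0 (Finset.mem_of_mem_erase htF) ht.2
      have hF₂1 : (insert z (F.erase e₁)) ∩ f 1 = ∅ := by
        rw [Finset.eq_empty_iff_forall_notMem]
        intro t ht
        rw [Finset.mem_inter, Finset.mem_insert] at ht
        rcases ht.1 with rfl | htF
        · exact hz1 ht.2
        · exact (Finset.mem_erase.1 htF).1 (rook_unique_in_interval hF.1 (Or.inr h1V)
            (Finset.mem_of_mem_erase htF) ht.2 he₁.1 he₁.2)
      refine ih 1 (by omega) _ (fun i => if i = 0 then f 0 else f 1) hF₂max ?_ ?_ ?_ ?_ ?_ ?_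
      · intro i hi
        by_cases h : i = 0
        · simp only [if_pos h]; exact hmax 0 (by omega)
        · simp only [if_neg h]; exact hmax 1 (by omega)
      · intro i hi
        have h0 : i = 0 := by omega
        subst h0
        refine ⟨c₀, Finset.mem_inter.2 ⟨?_, ?_⟩⟩ <;> simp [hc₀.1, hc₀.2]
      · simpa using h0H
      · simpa using h1V
      · simpa using hF₂0
      · simpa using hF₂1
  · -- `z` attacks only `e₂`: surgery `F₅ = F - e₂ + z` misses `f 2` and `f k`.
    have hA2 : Attacks P e₂ z := hAtt.resolve_left hA1
    obtain ⟨hne2z, I₂, hI₂, he₂I, hzI₂⟩ := hA2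
    have ht₂ : IsMaxVInterval P I₂ := by
      rcases hI₂ with h | h
      · exact absurd ((maxH_unique h h2H he₂I he₂.2) ▸ hzI₂) hz2
      · exact h
    have ht₂k : I₂ ≠ f k := fun h => hnot hFk he₂.1 (h ▸ he₂I)
    have hzk : z ∉ f k := fun h => ht₂k (maxV_unique ht₂ hkV hzI₂ h)
    obtain ⟨Hz, hHz, hzHz⟩ := exists_maxH P z hzP
    have hF₅rook : IsRookSet P (insert z (F.erase e₂)) := by
      refine rook_insert (rook_subset hF.1 (Finset.erase_subset _ _)) hzP ?_
      intro g hg hatt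
      have hgF : g ∈ F := Finset.mem_of_mem_erase hg
      rcases attacks_mem (attacks_symm hatt) hHz hzHz ht₂ hzI₂ with h | h
      · by_cases hge1 : g = e₁
        · subst hge1
          exact hA1 ⟨fun hh => hzF (hh ▸ hgF), Hz, Or.inl hHz, h, hzHz⟩
        · by_cases hge2 : g = e₂
          · exact (Finset.mem_erase.1 hg).1 hge2
          · exact hz_noatt g (Finset.mem_insert_of_mem (Finset.mem_erase.2 ⟨hge2,
              Finset.mem_erase.2 ⟨hge1, hgF⟩⟩)) hatt
      · exact (Finset.mem_erase.1 hg).1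
          (rook_unique_in_interval hF.1 (Or.inr ht₂) hgF h he₂.1 he₂I)
    have hzerase : z ∉ F.erase e₂ := fun h => hzF (Finset.mem_of_mem_erase h)
    have hF₅card : (insert z (F.erase e₂)).card = F.card := by
      rw [Finset.card_insert_of_notMem hzerase, Finset.card_erase_of_mem he₂.1]
      omega
    have hF₅max : IsMaxRookSet P (insert z (F.erase e₂)) :=
      card_maximal hEq hF hF₅rook (le_of_eq hF₅card.symm)
    have hF₅2 : (insert z (F.erase e₂)) ∩ f 2 = ∅ := by
      rw [Finset.eq_empty_iff_forall_notMem]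
      intro t ht
      rw [Finset.mem_inter, Finset.mem_insert] at ht
      rcases ht.1 with rfl | htF
      · exact hz2 ht.2
      · exact (Finset.mem_erase.1 htF).1 (rook_unique_in_interval hF.1 (Or.inl h2H)
          (Finset.mem_of_mem_erase htF) ht.2 he₂.1 he₂.2)
    have hF₅k : (insert z (F.erase e₂)) ∩ f k = ∅ := by
      rw [Finset.eq_empty_iff_forall_notMem]
      intro t ht
      rw [Finset.mem_inter, Finset.mem_insert] at ht
      rcases ht.1 with rfl | htF
      · exact hzk ht.2
      · exact hnot hFk (Finset.mem_of_mem_erase htF) ht.2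
    refine ih (k - 2) (by omega) _ (fun i => f (i + 2)) hF₅max ?_ ?_ h2H ?_ hF₅2 ?_
    · intro i hi; exact hmax (i + 2) (by omega)
    · intro i hi; exact hsh (i + 2) (by omega)
    · show IsMaxVInterval P (f (k - 2 + 2))
      rw [show k - 2 + 2 = k by omega]; exact hkV
    · show insert z (F.erase e₂) ∩ f (k - 2 + 2) = ∅
      rw [show k - 2 + 2 = k by omega]; exact hF₅k


/-- Key disjunction: under equimatchability, either every maximal horizontal interval meets
every maximal rook set, or every maximal vertical interval does. -/
lemma key_disjunction {P : Finset Cell} (hP : IsPolyomino P)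
    (hEq : ∀ F G, IsMaxRookSet P F → IsMaxRookSet P G → F.card = G.card) :
    (∀ F, IsMaxRookSet P F → ∀ I, IsMaxHInterval P I → (I ∩ F).Nonempty) ∨
    (∀ F, IsMaxRookSet P F → ∀ I, IsMaxVInterval P I → (I ∩ F).Nonempty) := by
  by_contra hcon
  push_neg at hcon
  obtain ⟨⟨F₁, hF₁, u, hu, hu'⟩, ⟨F₂, hF₂, w, hw, hw'⟩⟩ := hcon
  have hFu : F₁ ∩ u = ∅ := by
    rw [Finset.inter_comm]
    exact hu'
  have hFw : F₂ ∩ w = ∅ := by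
    rw [Finset.inter_comm]
    exact hw'
  obtain ⟨u', hu'H, hF₂u'⟩ := exists_missed_H hEq hF₁ hu hFu hF₂
  obtain ⟨cu, hcu⟩ := hseg_nonempty hu'H.1
  obtain ⟨cw, hcw⟩ := vseg_nonempty hw.1
  have hcuP : cu ∈ P := hu'H.2.1 hcu
  have hcwP : cw ∈ P := hw.2.1 hcw
  obtain ⟨k, f, hf0, hfk, hmaxi, hshi⟩ :=
    path_to_walk (hP.2 cu hcuP cw hcwP) u' (Or.inl hu'H) hcu w (Or.inr hw) hcw
  exact main_ind hEq k F₂ f hF₂ hmaxi hshi (hf0.symm ▸ hu'H) (hfk.symm ▸ hw)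
    (hf0.symm ▸ hF₂u') (hfk.symm ▸ hFw)

end S4

end Statement4Aux

/-- `G_P` is well-covered iff `G_P` is localizable. -/
theorem statement4 (P : Finset Cell) (hP : IsPolyomino P) :
    (∀ F G, IsMaxRookSet P F → IsMaxRookSet P G → F.card = G.card) ↔
      ∃ Q : Finset (Finset Cell),
        (∀ C ∈ Q, C ⊆ P ∧ ∀ c ∈ C, ∀ d ∈ C, c ≠ d → Attacks P c d) ∧
        (∀ C ∈ Q, ∀ D ∈ Q, C ≠ D → Disjoint C D) ∧
        Q.biUnion id = P ∧
        (∀ C ∈ Q, ∀ F, IsMaxRookSet P F → (C ∩ F).Nonempty) := by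
  classical
  constructor
  · intro hEq
    rcases S4.key_disjunction hP hEq with hkey | hkey
    · refine ⟨(P.powerset).filter (fun I => IsMaxHInterval P I), ?_, ?_, ?_, ?_⟩
      · intro C hC
        have hCH : IsMaxHInterval P C := (Finset.mem_filter.1 hC).2
        exact ⟨hCH.2.1, fun c hc d hd hne => ⟨hne, C, Or.inl hCH, hc, hd⟩⟩
      · intro C hC D hD hne
        have hCH : IsMaxHInterval P C := (Finset.mem_filter.1 hC).2
        have hDH : IsMaxHInterval P D := (Finset.mem_filter.1 hD).2
        rw [Finset.disjoint_left]
        intro a haC haD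
        exact hne (S4.maxH_unique hCH hDH haC haD)
      · ext c
        simp only [Finset.mem_biUnion, id]
        constructor
        · rintro ⟨I, hI, hcI⟩
          exact ((Finset.mem_filter.1 hI).2).2.1 hcI
        · intro hc
          obtain ⟨I, hI, hcI⟩ := S4.exists_maxH P c hc
          exact ⟨I, Finset.mem_filter.2 ⟨Finset.mem_powerset.2 hI.2.1, hI⟩, hcI⟩
      · intro C hC F hF
        exact hkey F hF C (Finset.mem_filter.1 hC).2
    · refine ⟨(P.powerset).filter (fun I => IsMaxVInterval P I), ?_, ?_, ?_, ?_⟩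
      · intro C hC
        have hCH : IsMaxVInterval P C := (Finset.mem_filter.1 hC).2
        exact ⟨hCH.2.1, fun c hc d hd hne => ⟨hne, C, Or.inr hCH, hc, hd⟩⟩
      · intro C hC D hD hne
        have hCH : IsMaxVInterval P C := (Finset.mem_filter.1 hC).2
        have hDH : IsMaxVInterval P D := (Finset.mem_filter.1 hD).2
        rw [Finset.disjoint_left]
        intro a haC haD
        exact hne (S4.maxV_unique hCH hDH haC haD)
      · ext c
        simp only [Finset.mem_biUnion, id]
        constructor
        · rintro ⟨I, hI, hcI⟩
          exact ((Finset.mem_filter.1 hI).2).2.1 hcI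
        · intro hc
          obtain ⟨I, hI, hcI⟩ := S4.exists_maxV P c hc
          exact ⟨I, Finset.mem_filter.2 ⟨Finset.mem_powerset.2 hI.2.1, hI⟩, hcI⟩
      · intro C hC F hF
        exact hkey F hF C (Finset.mem_filter.1 hC).2
  · rintro ⟨Q, hclq, hdis, hun, hstr⟩ F G hF hG
    suffices h : ∀ F, IsMaxRookSet P F → F.card = Q.card by rw [h F hF, h G hG]
    clear hF F
    intro F hF
    have hle1 : F.card ≤ Q.card := by
      have hex : ∀ f ∈ F, ∃ C, C ∈ Q ∧ f ∈ C := by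
        intro f hf
        have : f ∈ Q.biUnion id := by rw [hun]; exact hF.1.1 hf
        simpa using Finset.mem_biUnion.1 this
      set φ : Cell → Finset Cell := fun c => if h : ∃ C, C ∈ Q ∧ c ∈ C then h.choose else ∅
        with hφ
      have hφspec : ∀ f ∈ F, φ f ∈ Q ∧ f ∈ φ f := by
        intro f hf
        have h := hex f hf
        simp only [hφ, dif_pos h]
        exact h.choose_spec
      apply Finset.card_le_card_of_injOn φ (fun f hf => (hφspec f hf).1)
      intro a ha b hb heq
      by_contra hne
      have haφ : a ∈ φ a := (hφspec a (Finset.mem_coe.1 ha)).2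
      have hbφ : b ∈ φ a := heq ▸ (hφspec b (Finset.mem_coe.1 hb)).2
      exact hF.1.2 a (Finset.mem_coe.1 ha) b (Finset.mem_coe.1 hb)
        ((hclq _ (hφspec a (Finset.mem_coe.1 ha)).1).2 a haφ b hbφ hne)
    have hle2 : Q.card ≤ F.card := by
      set ψ : Finset Cell → Cell := fun C => if h : (C ∩ F).Nonempty then h.choose else (0, 0)
        with hψ
      have hψspec : ∀ C ∈ Q, ψ C ∈ C ∧ ψ C ∈ F := by
        intro C hC
        have h := hstr C hC F hF
        simp only [hψ, dif_pos h]
        exact Finset.mem_inter.1 h.choose_spec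
      apply Finset.card_le_card_of_injOn ψ (fun C hC => (hψspec C hC).2)
      intro C hC D hD heq
      by_contra hne
      have h1 : ψ C ∈ C := (hψspec C (Finset.mem_coe.1 hC)).1
      have h2 : ψ C ∈ D := heq ▸ (hψspec D (Finset.mem_coe.1 hD)).1
      exact Finset.disjoint_left.1 (hdis C (Finset.mem_coe.1 hC) D (Finset.mem_coe.1 hD) hne)
        h1 h2
    omega
end

section
/- Let P be a polyomino and let γ be an induced cycle of the complement graph Ḡ_P. Then the length of γ is 3, 4 or 6; in particular Ḡ_P has no induced cycle of length 5 and none of length ≥ 7. -/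
/-- Auxiliary: cells of a horizontal segment share the second coordinate. -/
lemma hseg_snd_eq {S : Finset Cell} (h : IsHSeg S) {c d : Cell} (hc : c ∈ S) (hd : d ∈ S) :
    c.2 = d.2 := by
  obtain ⟨y, a, b, -, rfl⟩ := h
  simp only [Finset.mem_image] at hc hd
  obtain ⟨x1, -, rfl⟩ := hc
  obtain ⟨x2, -, rfl⟩ := hd
  rfl

lemma vseg_fst_eq {S : Finset Cell} (h : IsVSeg S) {c d : Cell} (hc : c ∈ S) (hd : d ∈ S) :
    c.1 = d.1 := by
  obtain ⟨x, a, b, -, rfl⟩ := h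
  simp only [Finset.mem_image] at hc hd
  obtain ⟨y1, -, rfl⟩ := hc
  obtain ⟨y2, -, rfl⟩ := hd
  rfl

/-- The maximal horizontal interval through a cell is unique. -/
lemma maxH_unique {P I J : Finset Cell} (h : IsMaxHInterval P I)
    (h' : IsMaxHInterval P J) {a : Cell} (ha : a ∈ I) (ha' : a ∈ J) : I = J := by
  obtain ⟨⟨y1, a1, b1, hab1, rfl⟩, hIP, hImax⟩ := h
  obtain ⟨⟨y2, a2, b2, hab2, rfl⟩, hJP, hJmax⟩ := h'
  simp only [Finset.mem_image, Finset.mem_Icc] at ha ha'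
  obtain ⟨x1, hx1, hax1⟩ := ha
  obtain ⟨x2, hx2, hax2⟩ := ha'
  have hpe := hax1.trans hax2.symm
  have hy : y1 = y2 := (Prod.ext_iff.mp hpe).2
  have hx12 : x1 = x2 := (Prod.ext_iff.mp hpe).1
  subst hy; subst hx12
  have hKseg : IsHSeg ((Finset.Icc (min a1 a2) (max b1 b2)).image (fun x => (x, y1))) :=
    ⟨y1, _, _, by omega, rfl⟩
  have hKP : ((Finset.Icc (min a1 a2) (max b1 b2)).image (fun x => (x, y1))) ⊆ P := by
    intro p hp
    simp only [Finset.mem_image, Finset.mem_Icc] at hp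
    obtain ⟨x, hx, rfl⟩ := hp
    rcases (by omega : (a1 ≤ x ∧ x ≤ b1) ∨ (a2 ≤ x ∧ x ≤ b2)) with hh | hh
    · exact hIP (Finset.mem_image.mpr ⟨x, Finset.mem_Icc.mpr hh, rfl⟩)
    · exact hJP (Finset.mem_image.mpr ⟨x, Finset.mem_Icc.mpr hh, rfl⟩)
  have hIK : (Finset.Icc a1 b1).image (fun x => (x, y1)) ⊆
      (Finset.Icc (min a1 a2) (max b1 b2)).image (fun x => (x, y1)) :=
    Finset.image_subset_image (Finset.Icc_subset_Icc (min_le_left _ _) (le_max_left _ _))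
  have hJK : (Finset.Icc a2 b2).image (fun x => (x, y1)) ⊆
      (Finset.Icc (min a1 a2) (max b1 b2)).image (fun x => (x, y1)) :=
    Finset.image_subset_image (Finset.Icc_subset_Icc (min_le_right _ _) (le_max_right _ _))
  have e1 := hImax _ hKseg hKP hIK
  have e2 := hJmax _ hKseg hKP hJK
  rw [← e1, ← e2]

/-- The maximal vertical interval through a cell is unique. -/
lemma maxV_unique {P I J : Finset Cell} (h : IsMaxVInterval P I)
    (h' : IsMaxVInterval P J) {a : Cell} (ha : a ∈ I) (ha' : a ∈ J) : I = J := by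
  obtain ⟨⟨x1, a1, b1, hab1, rfl⟩, hIP, hImax⟩ := h
  obtain ⟨⟨x2, a2, b2, hab2, rfl⟩, hJP, hJmax⟩ := h'
  simp only [Finset.mem_image, Finset.mem_Icc] at ha ha'
  obtain ⟨y1, hy1, hay1⟩ := ha
  obtain ⟨y2, hy2, hay2⟩ := ha'
  have hpe := hay1.trans hay2.symm
  have hx : x1 = x2 := (Prod.ext_iff.mp hpe).1
  have hy12 : y1 = y2 := (Prod.ext_iff.mp hpe).2
  subst hx; subst hy12
  have hKseg : IsVSeg ((Finset.Icc (min a1 a2) (max b1 b2)).image (fun y => (x1, y))) :=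
    ⟨x1, _, _, by omega, rfl⟩
  have hKP : ((Finset.Icc (min a1 a2) (max b1 b2)).image (fun y => (x1, y))) ⊆ P := by
    intro p hp
    simp only [Finset.mem_image, Finset.mem_Icc] at hp
    obtain ⟨y, hy, rfl⟩ := hp
    rcases (by omega : (a1 ≤ y ∧ y ≤ b1) ∨ (a2 ≤ y ∧ y ≤ b2)) with hh | hh
    · exact hIP (Finset.mem_image.mpr ⟨y, Finset.mem_Icc.mpr hh, rfl⟩)
    · exact hJP (Finset.mem_image.mpr ⟨y, Finset.mem_Icc.mpr hh, rfl⟩)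
  have hIK : (Finset.Icc a1 b1).image (fun y => (x1, y)) ⊆
      (Finset.Icc (min a1 a2) (max b1 b2)).image (fun y => (x1, y)) :=
    Finset.image_subset_image (Finset.Icc_subset_Icc (min_le_left _ _) (le_max_left _ _))
  have hJK : (Finset.Icc a2 b2).image (fun y => (x1, y)) ⊆
      (Finset.Icc (min a1 a2) (max b1 b2)).image (fun y => (x1, y)) :=
    Finset.image_subset_image (Finset.Icc_subset_Icc (min_le_right _ _) (le_max_right _ _))
  have e1 := hImax _ hKseg hKP hIK
  have e2 := hJmax _ hKseg hKP hJK
  rw [← e1, ← e2]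

/-- Two cells lie in a common maximal horizontal interval. -/
def RowLinked (P : Finset Cell) (c d : Cell) : Prop :=
  ∃ I, IsMaxHInterval P I ∧ c ∈ I ∧ d ∈ I

/-- Two cells lie in a common maximal vertical interval. -/
def ColLinked (P : Finset Cell) (c d : Cell) : Prop :=
  ∃ I, IsMaxVInterval P I ∧ c ∈ I ∧ d ∈ I

lemma attack_split {P : Finset Cell} {c d : Cell} (h : Attacks P c d) :
    (c.2 = d.2 ∧ RowLinked P c d) ∨ (c.1 = d.1 ∧ ColLinked P c d) := by
  obtain ⟨hne, I, hI | hI, hc, hd⟩ := h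
  · exact Or.inl ⟨hseg_snd_eq hI.1 hc hd, I, hI, hc, hd⟩
  · exact Or.inr ⟨vseg_fst_eq hI.1 hc hd, I, hI, hc, hd⟩

lemma rowLinked_trans {P : Finset Cell} {a b c : Cell} (h1 : RowLinked P a b)
    (h2 : RowLinked P a c) (hne : b ≠ c) : Attacks P b c := by
  obtain ⟨I, hI, haI, hbI⟩ := h1
  obtain ⟨J, hJ, haJ, hcJ⟩ := h2
  have hIJ := maxH_unique hI hJ haI haJ
  subst hIJ
  exact ⟨hne, I, Or.inl hI, hbI, hcJ⟩

lemma colLinked_trans {P : Finset Cell} {a b c : Cell} (h1 : ColLinked P a b)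
    (h2 : ColLinked P a c) (hne : b ≠ c) : Attacks P b c := by
  obtain ⟨I, hI, haI, hbI⟩ := h1
  obtain ⟨J, hJ, haJ, hcJ⟩ := h2
  have hIJ := maxV_unique hI hJ haI haJ
  subst hIJ
  exact ⟨hne, I, Or.inr hI, hbI, hcJ⟩

/-- The alternation key lemma: if `a` attacks both `b` and `c`, which are distinct and
non-attacking, then exactly one of the attacks is horizontal. -/
lemma alt_key {P : Finset Cell} {a b c : Cell} (hab : Attacks P a b) (hac : Attacks P a c)
    (hbc : ¬ Attacks P b c) (hne : b ≠ c) : (a.2 = b.2 ↔ ¬ (a.2 = c.2)) := by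
  rcases attack_split hab with ⟨h1, hL1⟩ | ⟨h1, hL1⟩ <;>
    rcases attack_split hac with ⟨h2, hL2⟩ | ⟨h2, hL2⟩
  · exact absurd (rowLinked_trans hL1 hL2 hne) hbc
  · exact iff_of_true h1 (fun h4 => hac.1 (Prod.ext h2 h4))
  · exact iff_of_false (fun h4 => hab.1 (Prod.ext h1 h4)) (fun hh => hh h2)
  · exact absurd (colLinked_trans hL1 hL2 hne) hbc


set_option maxHeartbeats 1600000 in
/-- Every induced cycle of the complement graph of a polyomino has length 3, 4 or 6. -/
theorem statement5 (P : Finset Cell) (hP : IsPolyomino P) (n : ℕ)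
    (h : HasInducedCycle (GBar P) n) : n = 3 ∨ n = 4 ∨ n = 6 := by
  by_contra hcon
  push_neg at hcon
  obtain ⟨hne3, hne4, hne6⟩ := hcon
  obtain ⟨hn3, f, hinj, hadj⟩ := h
  have hn5 : 5 ≤ n := by omega
  haveI : NeZero n := ⟨by omega⟩
  -- attacking pairs: all non-consecutive pairs of the cycle
  have hatt : ∀ i j : ZMod n, i ≠ j → i ≠ j + 1 → j ≠ i + 1 →
      Attacks P (f i).1 (f j).1 := by
    intro i j h1 h2 h3
    have hna : ¬ (GBar P).Adj (f i) (f j) := by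
      rw [hadj]
      rintro (hh | hh)
      · exact h2 hh
      · exact h3 hh
    simp only [GBar, SimpleGraph.compl_adj] at hna
    push_neg at hna
    exact hna (fun e => h1 (hinj e))
  have hnonatt : ∀ i : ZMod n, ¬ Attacks P (f i).1 (f (i + 1)).1 := by
    intro i
    have hA : (GBar P).Adj (f i) (f (i + 1)) := (hadj i (i + 1)).mpr (Or.inr rfl)
    simp only [GBar, SimpleGraph.compl_adj] at hA
    exact hA.2
  -- cast helpers
  have hcastne : ∀ k : ℕ, 0 < k → k < n → ((k : ZMod n) ≠ 0) := by
    intro k h1 h2 he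
    have hv := congrArg ZMod.val he
    rw [ZMod.val_cast_of_lt h2, ZMod.val_zero] at hv
    omega
  have hcastne1 : ∀ k : ℕ, 2 ≤ k → k < n → ((k : ZMod n) ≠ 1) := by
    intro k h1 h2 he
    have he' : ((k : ℕ) : ZMod n) = ((1 : ℕ) : ZMod n) := by
      rw [he]; simp
    have hv := congrArg ZMod.val he'
    rw [ZMod.val_cast_of_lt h2, ZMod.val_cast_of_lt (by omega)] at hv
    omega
  have hattK : ∀ (i : ZMod n) (k : ℕ), 2 ≤ k → k ≤ n - 2 →
      Attacks P (f i).1 (f (i + (k : ZMod n))).1 := by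
    intro i k h2 hk
    apply hatt
    · intro he
      have h' : i + 0 = i + (k : ZMod n) := by rw [add_zero]; exact he
      exact hcastne k (by omega) (by omega) (add_left_cancel h').symm
    · intro he
      have h' : i + 0 = i + ((k : ZMod n) + 1) := by rw [add_zero, ← add_assoc]; exact he
      have h0 : ((k + 1 : ℕ) : ZMod n) = 0 := by
        push_cast
        exact (add_left_cancel h').symm
      exact hcastne (k + 1) (by omega) (by omega) h0
    · intro he
      exact hcastne1 k h2 (by omega) (add_left_cancel he)
  -- alternation of direction along the neighborhood of a fixed cycle vertex
  have haltstep : ∀ (i : ZMod n) (k : ℕ), 2 ≤ k → k ≤ n - 3 →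
      ((f i).1.2 = (f (i + (k : ZMod n))).1.2 ↔
        ¬ ((f i).1.2 = (f (i + ((k + 1 : ℕ) : ZMod n))).1.2)) := by
    intro i k h2 hk
    have e1 : (i + (k : ZMod n)) + 1 = i + ((k + 1 : ℕ) : ZMod n) := by
      push_cast
      ring
    apply alt_key (hattK i k h2 (by omega)) (hattK i (k + 1) (by omega) (by omega))
    · rw [← e1]
      exact hnonatt (i + (k : ZMod n))
    · intro he
      have h' : i + (k : ZMod n) = i + ((k + 1 : ℕ) : ZMod n) := hinj (Subtype.ext he)
      have h'' : (k : ZMod n) + 0 = (k : ZMod n) + 1 := by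
        have := add_left_cancel h'
        push_cast at this
        rw [add_zero]
        exact this
      have h0 : ((1 : ℕ) : ZMod n) = 0 := by
        push_cast
        exact (add_left_cancel h'').symm
      exact hcastne 1 one_pos (by omega) h0
  have haltIter : ∀ (k : ℕ), 2 ≤ k → k ≤ n - 2 → ∀ i : ZMod n,
      ((f i).1.2 = (f (i + (k : ZMod n))).1.2 ↔
        (((f i).1.2 = (f (i + ((2 : ℕ) : ZMod n))).1.2) ↔ Even k)) := by
    intro k hk2
    induction k, hk2 using Nat.le_induction with
    | base =>
      intro _ i
      have h2 : Even 2 := ⟨1, rfl⟩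
      tauto
    | succ k hk ih =>
      intro hk1 i
      have h1 := haltstep i k hk (by omega)
      have h2 := ih (by omega) i
      have h3 : ¬ Even (k + 1) ↔ Even k := by
        simp [Nat.even_add_one]
      tauto
  have hcycle : ∀ (k : ℕ), k ≤ n → ∀ i : ZMod n,
      (i + (k : ZMod n)) + ((n - k : ℕ) : ZMod n) = i := by
    intro k hk i
    rw [add_assoc, ← Nat.cast_add]
    have hkk : k + (n - k) = n := by omega
    rw [hkk, ZMod.natCast_self, add_zero]
  have hflip : ∀ i : ZMod n, ((f i).1.2 = (f (i + ((2 : ℕ) : ZMod n))).1.2) ↔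
      (((f (i + ((2 : ℕ) : ZMod n))).1.2 =
        (f ((i + ((2 : ℕ) : ZMod n)) + ((2 : ℕ) : ZMod n))).1.2) ↔ Even n) := by
    intro i
    have h1 := haltIter (n - 2) (by omega) (by omega) (i + ((2 : ℕ) : ZMod n))
    rw [hcycle 2 (by omega) i] at h1
    have h2 : Even (n - 2) ↔ Even n := by
      rw [Nat.even_sub (by omega : 2 ≤ n)]
      simp [show Even 2 from ⟨1, rfl⟩]
    rw [h2] at h1
    constructor
    · intro hh
      exact h1.mp hh.symm
    · intro hh
      exact (h1.mpr hh).symm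
  rcases Nat.even_or_odd n with hev | hodd
  · -- n even, so n ≥ 8
    have hn8 : 8 ≤ n := by
      rw [Nat.even_iff] at hev
      omega
    have hflip2 : ∀ i : ZMod n, ((f i).1.2 = (f (i + ((2 : ℕ) : ZMod n))).1.2) ↔
        ((f (i + ((2 : ℕ) : ZMod n))).1.2 =
          (f ((i + ((2 : ℕ) : ZMod n)) + ((2 : ℕ) : ZMod n))).1.2) := by
      intro i
      have := hflip i
      tauto
    have hb3 : ∀ i : ZMod n, ((f i).1.2 = (f (i + ((3 : ℕ) : ZMod n))).1.2 ↔
        ¬ ((f i).1.2 = (f (i + ((2 : ℕ) : ZMod n))).1.2)) := by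
      intro i
      have h1 := haltIter 3 (by omega) (by omega) i
      have h3 : ¬ Even 3 := by decide
      tauto
    have hb3' : ∀ i : ZMod n, ((f i).1.2 = (f (i + ((3 : ℕ) : ZMod n))).1.2 ↔
        ¬ ((f (i + ((3 : ℕ) : ZMod n))).1.2 =
          (f ((i + ((3 : ℕ) : ZMod n)) + ((2 : ℕ) : ZMod n))).1.2)) := by
      intro i
      have h1 := haltIter (n - 3) (by omega) (by omega) (i + ((3 : ℕ) : ZMod n))
      rw [hcycle 3 (by omega) i] at h1
      have h2 : ¬ Even (n - 3) := by
        intro hE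
        rw [Nat.even_sub (by omega : 3 ≤ n)] at hE
        exact (by decide : ¬ Even 3) (hE.mp hev)
      have hsymm : ((f i).1.2 = (f (i + ((3 : ℕ) : ZMod n))).1.2) ↔
          ((f (i + ((3 : ℕ) : ZMod n))).1.2 = (f i).1.2) := eq_comm
      tauto
    -- b i ↔ b (i+3)
    have hb03 : ∀ i : ZMod n, ((f i).1.2 = (f (i + ((2 : ℕ) : ZMod n))).1.2) ↔
        ((f (i + ((3 : ℕ) : ZMod n))).1.2 =
          (f ((i + ((3 : ℕ) : ZMod n)) + ((2 : ℕ) : ZMod n))).1.2) := by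
      intro i
      have h1 := hb3 i
      have h2 := hb3' i
      tauto
    set z : ZMod n := 0 with hz
    set t3 : ZMod n := z + ((3 : ℕ) : ZMod n) with ht3
    have e36 : t3 + ((3 : ℕ) : ZMod n) = z + ((6 : ℕ) : ZMod n) := by
      rw [ht3]
      push_cast
      ring_nf
    have A1 := hb3 z
    have A2 := hb3 t3
    have A3 := hb03 z
    have hA4 := haltIter 6 (by omega) (by omega) z
    have hE6 : Even 6 := ⟨3, rfl⟩
    have A4 : ((f z).1.2 = (f (z + ((6 : ℕ) : ZMod n))).1.2) ↔
        ((f z).1.2 = (f (z + ((2 : ℕ) : ZMod n))).1.2) := by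
      constructor
      · intro hh
        exact (hA4.mp hh).mpr hE6
      · intro hh
        exact hA4.mpr (iff_of_true hh hE6)
    have T03 := hattK z 3 (by omega) (by omega)
    have T36 := hattK t3 3 (by omega) (by omega)
    have T06 := hattK z 6 (by omega) (by omega)
    by_cases hX : (f z).1.2 = (f (z + ((2 : ℕ) : ZMod n))).1.2
    · have hR06 : (f z).1.2 = (f (z + ((6 : ℕ) : ZMod n))).1.2 := A4.mpr hX
      have hR03 : ¬ ((f z).1.2 = (f t3).1.2) := fun hh => (A1.mp hh) hX
      have hR36 : ¬ ((f t3).1.2 = (f (t3 + ((3 : ℕ) : ZMod n))).1.2) := by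
        intro hh
        exact (A2.mp hh) (A3.mp hX)
      have c03 : (f z).1.1 = (f t3).1.1 := by
        rcases attack_split T03 with ⟨hh, -⟩ | ⟨hh, -⟩
        · exact absurd hh hR03
        · exact hh
      have c36 : (f t3).1.1 = (f (t3 + ((3 : ℕ) : ZMod n))).1.1 := by
        rcases attack_split T36 with ⟨hh, -⟩ | ⟨hh, -⟩
        · exact absurd hh hR36
        · exact hh
      have c06 : (f z).1.1 = (f (z + ((6 : ℕ) : ZMod n))).1.1 := by
        rw [← e36]
        exact c03.trans c36
      exact T06.1 (Prod.ext c06 hR06)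
    · have hR03 : (f z).1.2 = (f t3).1.2 := A1.mpr hX
      have hR36 : (f t3).1.2 = (f (t3 + ((3 : ℕ) : ZMod n))).1.2 :=
        A2.mpr (fun hh => hX (A3.mpr hh))
      have hR06 : (f z).1.2 = (f (z + ((6 : ℕ) : ZMod n))).1.2 := by
        rw [← e36]
        exact hR03.trans hR36
      exact hX (A4.mp hR06)
  · -- n odd
    have hodd' : ¬ Even n := by
      rw [Nat.even_iff]
      rw [Nat.odd_iff] at hodd
      omega
    have hstep : ∀ i : ZMod n, ((f i).1.2 = (f (i + ((2 : ℕ) : ZMod n))).1.2) ↔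
        ¬ ((f (i + ((2 : ℕ) : ZMod n))).1.2 =
          (f ((i + ((2 : ℕ) : ZMod n)) + ((2 : ℕ) : ZMod n))).1.2) := by
      intro i
      have := hflip i
      tauto
    have hclaim : ∀ m : ℕ,
        (((f ((0 : ZMod n) + ((2 * m : ℕ) : ZMod n))).1.2 =
          (f (((0 : ZMod n) + ((2 * m : ℕ) : ZMod n)) + ((2 : ℕ) : ZMod n))).1.2) ↔
          (((f (0 : ZMod n)).1.2 = (f ((0 : ZMod n) + ((2 : ℕ) : ZMod n))).1.2) ↔ Even m)) := by
      intro m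
      induction m with
      | zero =>
        have e0 : (0 : ZMod n) + ((2 * 0 : ℕ) : ZMod n) = 0 := by norm_num
        rw [e0]
        have hE0 : Even 0 := ⟨0, rfl⟩
        tauto
      | succ m ih =>
        have estep : (0 : ZMod n) + ((2 * (m + 1) : ℕ) : ZMod n) =
            ((0 : ZMod n) + ((2 * m : ℕ) : ZMod n)) + ((2 : ℕ) : ZMod n) := by
          push_cast
          ring
        rw [estep]
        have h1 := hstep ((0 : ZMod n) + ((2 * m : ℕ) : ZMod n))
        have h2 : Even (m + 1) ↔ ¬ Even m := by
          simp [Nat.even_add_one]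
        tauto
    have e0n : (0 : ZMod n) + ((2 * n : ℕ) : ZMod n) = 0 := by
      rw [Nat.cast_mul, ZMod.natCast_self, mul_zero, add_zero]
    have hfin := hclaim n
    rw [e0n] at hfin
    tauto
end

section
/- Let P be a polyomino containing all six cells of some 2×3 or 3×2 rectangle of cells. Then these six cells induce a 6-cycle in the complement graph Ḡ_P; in particular, Ḡ_P is not chordal. -/
section Helpers

open Finset

lemma exists_maxH (P : Finset Cell) (y A B : ℤ) (hAB : A ≤ B)
    (hsub : ∀ x ∈ Finset.Icc A B, ((x, y) : Cell) ∈ P) :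
    ∃ I, IsMaxHInterval P I ∧ ∀ x ∈ Finset.Icc A B, ((x, y) : Cell) ∈ I := by
  classical
  have hPne : ((A, y) : Cell) ∈ P := hsub A (by simp [hAB])
  obtain ⟨m, hm⟩ : ∃ m : ℤ, ∀ p ∈ P, m ≤ p.1 :=
    ⟨(P.image Prod.fst).min' ⟨A, Finset.mem_image_of_mem _ hPne⟩,
      fun p hp => Finset.min'_le _ _ (Finset.mem_image_of_mem _ hp)⟩
  obtain ⟨M, hM⟩ : ∃ M : ℤ, ∀ p ∈ P, p.1 ≤ M :=
    ⟨(P.image Prod.fst).max' ⟨A, Finset.mem_image_of_mem _ hPne⟩,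
      fun p hp => Finset.le_max' _ _ (Finset.mem_image_of_mem _ hp)⟩
  obtain ⟨a', ⟨ha'A, ha'P⟩, ha'least⟩ :=
    Int.exists_least_of_bdd (P := fun x => x ≤ A ∧ ∀ z ∈ Finset.Icc x A, ((z, y) : Cell) ∈ P)
      ⟨m, fun z hz => hm _ (hz.2 z (by simp [hz.1]))⟩
      ⟨A, le_refl A, fun z hz => hsub z (by simp at hz ⊢; omega)⟩
  obtain ⟨b', ⟨hb'B, hb'P⟩, hb'greatest⟩ :=
    Int.exists_greatest_of_bdd (P := fun x => B ≤ x ∧ ∀ z ∈ Finset.Icc B x, ((z, y) : Cell) ∈ P)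
      ⟨M, fun z hz => hM _ (hz.2 z (by simp [hz.1]))⟩
      ⟨B, le_refl B, fun z hz => hsub z (by simp at hz ⊢; omega)⟩
  have hab' : a' ≤ b' := by omega
  have hIP : ∀ x ∈ Finset.Icc a' b', ((x, y) : Cell) ∈ P := by
    intro x hx
    simp only [Finset.mem_Icc] at hx
    rcases le_or_gt x A with h | h
    · exact ha'P x (by simp; omega)
    rcases le_or_gt x B with h2 | h2
    · exact hsub x (by simp; omega)
    · exact hb'P x (by simp; omega)
  refine ⟨(Finset.Icc a' b').image (fun x => (x, y)), ⟨⟨y, a', b', hab', rfl⟩, ?_, ?_⟩, ?_⟩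
  · intro c hc
    simp only [Finset.mem_image] at hc
    obtain ⟨x, hx, rfl⟩ := hc
    exact hIP x hx
  · rintro I' ⟨y2, c, d, hcd, rfl⟩ hI'P hII'
    have h1 := hII' (Finset.mem_image_of_mem (fun x => (x, y))
      (show a' ∈ Finset.Icc a' b' by simp [hab']))
    have h2 := hII' (Finset.mem_image_of_mem (fun x => (x, y))
      (show b' ∈ Finset.Icc a' b' by simp [hab']))
    simp only [Finset.mem_image, Finset.mem_Icc, Prod.mk.injEq] at h1 h2
    obtain ⟨x1, hx1, e1, ey⟩ := h1
    obtain ⟨x2, hx2, e2, -⟩ := h2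
    subst ey
    have hca : a' ≤ c := ha'least c ⟨by omega,
      fun z hz => hI'P (Finset.mem_image_of_mem _ (by simp at hz ⊢; omega))⟩
    have hbd : d ≤ b' := hb'greatest d ⟨by omega,
      fun z hz => hI'P (Finset.mem_image_of_mem _ (by simp at hz ⊢; omega))⟩
    have hc1 : c = a' := by omega
    have hc2 : d = b' := by omega
    rw [hc1, hc2]
  · intro x hx
    refine Finset.mem_image_of_mem _ ?_
    simp at hx ⊢
    omega

lemma exists_maxV (P : Finset Cell) (x A B : ℤ) (hAB : A ≤ B)
    (hsub : ∀ y ∈ Finset.Icc A B, ((x, y) : Cell) ∈ P) :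
    ∃ I, IsMaxVInterval P I ∧ ∀ y ∈ Finset.Icc A B, ((x, y) : Cell) ∈ I := by
  classical
  have hPne : ((x, A) : Cell) ∈ P := hsub A (by simp [hAB])
  obtain ⟨m, hm⟩ : ∃ m : ℤ, ∀ p ∈ P, m ≤ p.2 :=
    ⟨(P.image Prod.snd).min' ⟨A, Finset.mem_image_of_mem _ hPne⟩,
      fun p hp => Finset.min'_le _ _ (Finset.mem_image_of_mem _ hp)⟩
  obtain ⟨M, hM⟩ : ∃ M : ℤ, ∀ p ∈ P, p.2 ≤ M :=
    ⟨(P.image Prod.snd).max' ⟨A, Finset.mem_image_of_mem _ hPne⟩,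
      fun p hp => Finset.le_max' _ _ (Finset.mem_image_of_mem _ hp)⟩
  obtain ⟨a', ⟨ha'A, ha'P⟩, ha'least⟩ :=
    Int.exists_least_of_bdd (P := fun z => z ≤ A ∧ ∀ w ∈ Finset.Icc z A, ((x, w) : Cell) ∈ P)
      ⟨m, fun z hz => hm _ (hz.2 z (by simp [hz.1]))⟩
      ⟨A, le_refl A, fun z hz => hsub z (by simp at hz ⊢; omega)⟩
  obtain ⟨b', ⟨hb'B, hb'P⟩, hb'greatest⟩ :=
    Int.exists_greatest_of_bdd (P := fun z => B ≤ z ∧ ∀ w ∈ Finset.Icc B z, ((x, w) : Cell) ∈ P)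
      ⟨M, fun z hz => hM _ (hz.2 z (by simp [hz.1]))⟩
      ⟨B, le_refl B, fun z hz => hsub z (by simp at hz ⊢; omega)⟩
  have hab' : a' ≤ b' := by omega
  have hIP : ∀ y ∈ Finset.Icc a' b', ((x, y) : Cell) ∈ P := by
    intro y hy
    simp only [Finset.mem_Icc] at hy
    rcases le_or_gt y A with h | h
    · exact ha'P y (by simp; omega)
    rcases le_or_gt y B with h2 | h2
    · exact hsub y (by simp; omega)
    · exact hb'P y (by simp; omega)
  refine ⟨(Finset.Icc a' b').image (fun y => (x, y)), ⟨⟨x, a', b', hab', rfl⟩, ?_, ?_⟩, ?_⟩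
  · intro c hc
    simp only [Finset.mem_image] at hc
    obtain ⟨y, hy, rfl⟩ := hc
    exact hIP y hy
  · rintro I' ⟨x2, c, d, hcd, rfl⟩ hI'P hII'
    have h1 := hII' (Finset.mem_image_of_mem (fun y => (x, y))
      (show a' ∈ Finset.Icc a' b' by simp [hab']))
    have h2 := hII' (Finset.mem_image_of_mem (fun y => (x, y))
      (show b' ∈ Finset.Icc a' b' by simp [hab']))
    simp only [Finset.mem_image, Finset.mem_Icc, Prod.mk.injEq] at h1 h2
    obtain ⟨y1, hy1, ey, e1⟩ := h1
    obtain ⟨y2, hy2, -, e2⟩ := h2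
    subst ey
    have hca : a' ≤ c := ha'least c ⟨by omega,
      fun z hz => hI'P (Finset.mem_image_of_mem _ (by simp at hz ⊢; omega))⟩
    have hbd : d ≤ b' := hb'greatest d ⟨by omega,
      fun z hz => hI'P (Finset.mem_image_of_mem _ (by simp at hz ⊢; omega))⟩
    have hc1 : c = a' := by omega
    have hc2 : d = b' := by omega
    rw [hc1, hc2]
  · intro y hy
    refine Finset.mem_image_of_mem _ ?_
    simp at hy ⊢
    omega

lemma attacks_row (P : Finset Cell) {c d : Cell} (hne : c ≠ d) (hy : c.2 = d.2)
    (h : ∀ x ∈ Finset.Icc (min c.1 d.1) (max c.1 d.1), ((x, c.2) : Cell) ∈ P) :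
    Attacks P c d := by
  obtain ⟨I, hI, hIm⟩ := exists_maxH P c.2 _ _ min_le_max h
  refine ⟨hne, I, Or.inl hI, ?_, ?_⟩
  · have h1 := hIm c.1 (by simp)
    simpa using h1
  · have h2 := hIm d.1 (by simp)
    rw [hy] at h2
    simpa using h2

lemma attacks_col (P : Finset Cell) {c d : Cell} (hne : c ≠ d) (hx : c.1 = d.1)
    (h : ∀ y ∈ Finset.Icc (min c.2 d.2) (max c.2 d.2), ((c.1, y) : Cell) ∈ P) :
    Attacks P c d := by
  obtain ⟨I, hI, hIm⟩ := exists_maxV P c.1 _ _ min_le_max h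
  refine ⟨hne, I, Or.inr hI, ?_, ?_⟩
  · have h1 := hIm c.2 (by simp)
    simpa using h1
  · have h2 := hIm d.2 (by simp)
    rw [hx] at h2
    simpa using h2

lemma not_attacks_diag (P : Finset Cell) {c d : Cell} (h1 : c.1 ≠ d.1) (h2 : c.2 ≠ d.2) :
    ¬ Attacks P c d := by
  rintro ⟨-, I, hI, hc, hd⟩
  rcases hI with ⟨⟨y, A, B, -, rfl⟩, -, -⟩ | ⟨⟨x, A, B, -, rfl⟩, -, -⟩
  · simp only [Finset.mem_image] at hc hd
    obtain ⟨x1, -, e1⟩ := hc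
    obtain ⟨x2, -, e2⟩ := hd
    apply h2
    rw [← e1, ← e2]
  · simp only [Finset.mem_image] at hc hd
    obtain ⟨y1, -, e1⟩ := hc
    obtain ⟨y2, -, e2⟩ := hd
    apply h1
    rw [← e1, ← e2]

lemma adj_char (P : Finset Cell) {x0 x1 y0 y1 : ℤ}
    (hsub : Finset.Icc x0 x1 ×ˢ Finset.Icc y0 y1 ⊆ P)
    {c d : Cell} (hc : c ∈ Finset.Icc x0 x1 ×ˢ Finset.Icc y0 y1)
    (hd : d ∈ Finset.Icc x0 x1 ×ˢ Finset.Icc y0 y1)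
    (hcP : c ∈ P) (hdP : d ∈ P) :
    (GBar P).Adj ⟨c, hcP⟩ ⟨d, hdP⟩ ↔ (c.1 ≠ d.1 ∧ c.2 ≠ d.2) := by
  have hadj : (GBar P).Adj ⟨c, hcP⟩ ⟨d, hdP⟩ ↔
      (⟨c, hcP⟩ : {c : Cell // c ∈ P}) ≠ ⟨d, hdP⟩ ∧ ¬ Attacks P c d :=
    SimpleGraph.compl_adj _ _ _
  rw [hadj]
  simp only [Finset.mem_product, Finset.mem_Icc] at hc hd
  constructor
  · rintro ⟨hne, hnat⟩
    have hnecd : c ≠ d := fun h => hne (Subtype.ext h)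
    constructor
    · intro hx
      exact hnat (attacks_col P hnecd hx (fun y hy => hsub (by
        simp only [Finset.mem_Icc] at hy
        simp only [Finset.mem_product, Finset.mem_Icc]
        omega)))
    · intro hy
      exact hnat (attacks_row P hnecd hy (fun x hx => hsub (by
        simp only [Finset.mem_Icc] at hx
        simp only [Finset.mem_product, Finset.mem_Icc]
        omega)))
  · rintro ⟨h1, h2⟩
    refine ⟨?_, not_attacks_diag P h1 h2⟩
    intro h
    exact h1 (congrArg (fun p => (Subtype.val p).1) h)

end Helpers

lemma key6 : ∀ v w : Fin 6, (v.val % 2 ≠ w.val % 2 ∧ v.val % 3 ≠ w.val % 3) →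
    (v.val = (w.val + 1) % 6 ∨ w.val = (v.val + 1) % 6) := by
  decide

lemma zmod6_succ_iff : ∀ i j : ZMod 6,
    (i = j + 1 ∨ j = i + 1) ↔ (i.val = (j.val + 1) % 6 ∨ j.val = (i.val + 1) % 6) := by
  decide

/-- If `P` contains a `2×3` or `3×2` rectangle of cells, then those six cells
induce a 6-cycle in `Ḡ_P`; in particular `Ḡ_P` is not chordal. -/
theorem statement6 (P : Finset Cell) (hP : IsPolyomino P) (a : Cell)
    (S : Finset Cell)
    (hS : S = Finset.Icc a.1 (a.1 + 1) ×ˢ Finset.Icc a.2 (a.2 + 2) ∨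
          S = Finset.Icc a.1 (a.1 + 2) ×ˢ Finset.Icc a.2 (a.2 + 1))
    (hSP : S ⊆ P) :
    (∃ f : ZMod 6 → {c : Cell // c ∈ P}, Function.Injective f ∧
      (∀ i, (f i : Cell) ∈ S) ∧
      ∀ i j : ZMod 6, (GBar P).Adj (f i) (f j) ↔ (i = j + 1 ∨ j = i + 1)) ∧
    ¬ IsChordal (GBar P) := by
  classical
  have hmain : ∃ f : ZMod 6 → {c : Cell // c ∈ P}, Function.Injective f ∧
      (∀ i, (f i : Cell) ∈ S) ∧
      ∀ i j : ZMod 6, (GBar P).Adj (f i) (f j) ↔ (i = j + 1 ∨ j = i + 1) := by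
    rcases hS with rfl | rfl
    · set g : ZMod 6 → Cell :=
        fun i => (a.1 + ((i.val % 2 : ℕ) : ℤ), a.2 + ((i.val % 3 : ℕ) : ℤ)) with hg
      have hgS : ∀ i, g i ∈ Finset.Icc a.1 (a.1+1) ×ˢ Finset.Icc a.2 (a.2+2) := by
        intro i
        have hv : i.val < 6 := ZMod.val_lt i
        simp only [hg, Finset.mem_product, Finset.mem_Icc]
        omega
      refine ⟨fun i => ⟨g i, hSP (hgS i)⟩, ?_, fun i => hgS i, ?_⟩
      · intro i j hij
        have h : g i = g j := congrArg Subtype.val hij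
        have hvi : i.val < 6 := ZMod.val_lt i
        have hvj : j.val < 6 := ZMod.val_lt j
        simp only [hg, Prod.ext_iff] at h
        exact ZMod.val_injective 6 (by omega)
      · intro i j
        rw [adj_char P hSP (hgS i) (hgS j), zmod6_succ_iff]
        have hvi : i.val < 6 := ZMod.val_lt i
        have hvj : j.val < 6 := ZMod.val_lt j
        simp only [hg]
        constructor
        · rintro ⟨h1, h2⟩
          exact key6 ⟨i.val, hvi⟩ ⟨j.val, hvj⟩
            ⟨show i.val % 2 ≠ j.val % 2 by omega, show i.val % 3 ≠ j.val % 3 by omega⟩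
        · rintro h
          refine ⟨?_, ?_⟩ <;> omega
    · set g : ZMod 6 → Cell :=
        fun i => (a.1 + ((i.val % 3 : ℕ) : ℤ), a.2 + ((i.val % 2 : ℕ) : ℤ)) with hg
      have hgS : ∀ i, g i ∈ Finset.Icc a.1 (a.1+2) ×ˢ Finset.Icc a.2 (a.2+1) := by
        intro i
        have hv : i.val < 6 := ZMod.val_lt i
        simp only [hg, Finset.mem_product, Finset.mem_Icc]
        omega
      refine ⟨fun i => ⟨g i, hSP (hgS i)⟩, ?_, fun i => hgS i, ?_⟩
      · intro i j hij
        have h : g i = g j := congrArg Subtype.val hij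
        have hvi : i.val < 6 := ZMod.val_lt i
        have hvj : j.val < 6 := ZMod.val_lt j
        simp only [hg, Prod.ext_iff] at h
        exact ZMod.val_injective 6 (by omega)
      · intro i j
        rw [adj_char P hSP (hgS i) (hgS j), zmod6_succ_iff]
        have hvi : i.val < 6 := ZMod.val_lt i
        have hvj : j.val < 6 := ZMod.val_lt j
        simp only [hg]
        constructor
        · rintro ⟨h1, h2⟩
          exact key6 ⟨i.val, hvi⟩ ⟨j.val, hvj⟩
            ⟨show i.val % 2 ≠ j.val % 2 by omega, show i.val % 3 ≠ j.val % 3 by omega⟩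
        · rintro h
          refine ⟨?_, ?_⟩ <;> omega
  obtain ⟨f, hinj, hfS, hadj⟩ := hmain
  refine ⟨⟨f, hinj, hfS, hadj⟩, ?_⟩
  intro hch
  exact hch 6 (by norm_num) ⟨by norm_num, f, hinj, hadj⟩
end

section
/- Let P be a polyomino whose complement graph Ḡ_P is chordal. Then any two cells of P are joined by a path of cells of P having at most 2 changes of direction. -/
/-! ### Auxiliary development -/

section AuxDev

/-- Cells `a b` lie in the same row with all cells between them in `P`. -/
def RowConn (P : Finset Cell) (a b : Cell) : Prop :=
  a.2 = b.2 ∧ ∀ x : ℤ, ((a.1 ≤ x ∧ x ≤ b.1) ∨ (b.1 ≤ x ∧ x ≤ a.1)) → (x, a.2) ∈ P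

/-- Cells `a b` lie in the same column with all cells between them in `P`. -/
def ColConn (P : Finset Cell) (a b : Cell) : Prop :=
  a.1 = b.1 ∧ ∀ y : ℤ, ((a.2 ≤ y ∧ y ≤ b.2) ∨ (b.2 ≤ y ∧ y ≤ a.2)) → (a.1, y) ∈ P

lemma RowConn.mem_left {P : Finset Cell} {a b : Cell} (h : RowConn P a b) : a ∈ P := by
  have := h.2 a.1 (by omega)
  simpa using this

lemma RowConn.mem_right {P : Finset Cell} {a b : Cell} (h : RowConn P a b) : b ∈ P := by
  have := h.2 b.1 (by omega)
  rw [h.1] at this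
  simpa using this

lemma ColConn.mem_left {P : Finset Cell} {a b : Cell} (h : ColConn P a b) : a ∈ P := by
  have := h.2 a.2 (by omega)
  simpa using this

lemma ColConn.mem_right {P : Finset Cell} {a b : Cell} (h : ColConn P a b) : b ∈ P := by
  have := h.2 b.2 (by omega)
  rw [h.1] at this
  simpa using this

lemma RowConn.refl {P : Finset Cell} {a : Cell} (h : a ∈ P) : RowConn P a a :=
  ⟨rfl, fun x hx => by
    have : x = a.1 := by omega
    subst this; simpa using h⟩

lemma ColConn.refl {P : Finset Cell} {a : Cell} (h : a ∈ P) : ColConn P a a :=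
  ⟨rfl, fun y hy => by
    have : y = a.2 := by omega
    subst this; simpa using h⟩

lemma RowConn.symm {P : Finset Cell} {a b : Cell} (h : RowConn P a b) : RowConn P b a :=
  ⟨h.1.symm, fun x hx => by
    have := h.2 x (by omega)
    rwa [h.1] at this⟩

lemma ColConn.symm {P : Finset Cell} {a b : Cell} (h : ColConn P a b) : ColConn P b a :=
  ⟨h.1.symm, fun y hy => by
    have := h.2 y (by omega)
    rwa [h.1] at this⟩

lemma RowConn.trans {P : Finset Cell} {a b c : Cell} (h1 : RowConn P a b)
    (h2 : RowConn P b c) : RowConn P a c := by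
  refine ⟨h1.1.trans h2.1, fun x hx => ?_⟩
  rcases (by omega : ((a.1 ≤ x ∧ x ≤ b.1) ∨ (b.1 ≤ x ∧ x ≤ a.1)) ∨
      ((b.1 ≤ x ∧ x ≤ c.1) ∨ (c.1 ≤ x ∧ x ≤ b.1))) with h | h
  · exact h1.2 x h
  · have := h2.2 x h
    rwa [← h1.1] at this

lemma ColConn.trans {P : Finset Cell} {a b c : Cell} (h1 : ColConn P a b)
    (h2 : ColConn P b c) : ColConn P a c := by
  refine ⟨h1.1.trans h2.1, fun y hy => ?_⟩
  rcases (by omega : ((a.2 ≤ y ∧ y ≤ b.2) ∨ (b.2 ≤ y ∧ y ≤ a.2)) ∨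
      ((b.2 ≤ y ∧ y ≤ c.2) ∨ (c.2 ≤ y ∧ y ≤ b.2))) with h | h
  · exact h1.2 y h
  · have := h2.2 y h
    rwa [← h1.1] at this

end AuxDev
section AuxDev2

open Finset in
lemma exists_maxH_s7 (P : Finset Cell) {a b : Cell} (h : RowConn P a b) :
    ∃ I, IsMaxHInterval P I ∧ a ∈ I ∧ b ∈ I := by
  classical
  set y := a.2 with hy
  set L : Finset ℤ := ((P.filter (fun p => p.2 = y)).image Prod.fst).filter
    (fun x' => x' ≤ a.1 ∧ ∀ x ∈ Finset.Icc x' a.1, (x, y) ∈ P) with hL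
  set R : Finset ℤ := ((P.filter (fun p => p.2 = y)).image Prod.fst).filter
    (fun b' => a.1 ≤ b' ∧ ∀ x ∈ Finset.Icc a.1 b', (x, y) ∈ P) with hR
  have hmemT : ∀ x : ℤ, (x, y) ∈ P → x ∈ (P.filter (fun p => p.2 = y)).image Prod.fst := by
    intro x hx
    exact Finset.mem_image.2 ⟨(x, y), Finset.mem_filter.2 ⟨hx, rfl⟩, rfl⟩
  have haP : (a.1, y) ∈ P := by simpa using h.mem_left
  have haL : a.1 ∈ L := by
    refine Finset.mem_filter.2 ⟨hmemT _ haP, le_rfl, ?_⟩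
    intro x hx
    simp only [Finset.mem_Icc] at hx
    have : x = a.1 := by omega
    subst this; exact haP
  have haR : a.1 ∈ R := by
    refine Finset.mem_filter.2 ⟨hmemT _ haP, le_rfl, ?_⟩
    intro x hx
    simp only [Finset.mem_Icc] at hx
    have : x = a.1 := by omega
    subst this; exact haP
  set lo := L.min' ⟨a.1, haL⟩ with hlo
  set hi := R.max' ⟨a.1, haR⟩ with hhi
  have hloL : lo ∈ L := Finset.min'_mem _ _
  have hhiR : hi ∈ R := Finset.max'_mem _ _
  have hloa : lo ≤ a.1 := (Finset.mem_filter.1 hloL).2.1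
  have hahi : a.1 ≤ hi := (Finset.mem_filter.1 hhiR).2.1
  have hgoodL : ∀ x ∈ Finset.Icc lo a.1, (x, y) ∈ P := (Finset.mem_filter.1 hloL).2.2
  have hgoodR : ∀ x ∈ Finset.Icc a.1 hi, (x, y) ∈ P := (Finset.mem_filter.1 hhiR).2.2
  have hseg : ∀ x : ℤ, lo ≤ x → x ≤ hi → (x, y) ∈ P := by
    intro x h1 h2
    rcases le_or_gt x a.1 with h3 | h3
    · exact hgoodL x (Finset.mem_Icc.2 ⟨h1, h3⟩)
    · exact hgoodR x (Finset.mem_Icc.2 ⟨by omega, h2⟩)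
  refine ⟨(Finset.Icc lo hi).image (fun x => (x, y)), ⟨⟨y, lo, hi, by omega, rfl⟩, ?_, ?_⟩, ?_, ?_⟩
  · intro p hp
    obtain ⟨x, hx, rfl⟩ := Finset.mem_image.1 hp
    rw [Finset.mem_Icc] at hx
    exact hseg x hx.1 hx.2
  · rintro I' ⟨y', a', b', hab', rfl⟩ hsub' hII'
    have hmemI : ∀ x : ℤ, lo ≤ x → x ≤ hi →
        (x, y) ∈ (Finset.Icc lo hi).image (fun x => (x, y)) := by
      intro x h1 h2
      exact Finset.mem_image.2 ⟨x, Finset.mem_Icc.2 ⟨h1, h2⟩, rfl⟩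
    have hloI : (lo, y) ∈ (Finset.Icc a' b').image (fun x => (x, y')) :=
      hII' (hmemI lo le_rfl (by omega))
    have hhiI : (hi, y) ∈ (Finset.Icc a' b').image (fun x => (x, y')) :=
      hII' (hmemI hi (by omega) le_rfl)
    obtain ⟨x1, hx1, hx1e⟩ := Finset.mem_image.1 hloI
    obtain ⟨x2, hx2, hx2e⟩ := Finset.mem_image.1 hhiI
    have hy' : y' = y := (Prod.mk.injEq _ _ _ _ ▸ hx1e).2
    have hx1' : x1 = lo := (Prod.mk.injEq _ _ _ _ ▸ hx1e).1
    have hx2' : x2 = hi := (Prod.mk.injEq _ _ _ _ ▸ hx2e).1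
    subst hy' hx1' hx2'
    rw [Finset.mem_Icc] at hx1 hx2
    have hsubP : ∀ x : ℤ, a' ≤ x → x ≤ b' → (x, y) ∈ P := by
      intro x h1 h2
      exact hsub' (Finset.mem_image.2 ⟨x, Finset.mem_Icc.2 ⟨h1, h2⟩, rfl⟩)
    have ha'L : a' ∈ L := by
      refine Finset.mem_filter.2 ⟨hmemT _ (hsubP a' le_rfl hab'), by omega, ?_⟩
      intro x hx
      rw [Finset.mem_Icc] at hx
      exact hsubP x hx.1 (by omega)
    have hb'R : b' ∈ R := by
      refine Finset.mem_filter.2 ⟨hmemT _ (hsubP b' (by omega) le_rfl), by omega, ?_⟩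
      intro x hx
      rw [Finset.mem_Icc] at hx
      exact hsubP x (by omega) hx.2
    have h1 : lo ≤ a' := Finset.min'_le _ _ ha'L
    have h2 : b' ≤ hi := Finset.le_max' _ _ hb'R
    have : a' = lo := by omega
    subst this
    have : b' = hi := by omega
    subst this
    rfl
  · refine Finset.mem_image.2 ⟨a.1, Finset.mem_Icc.2 ⟨hloa, hahi⟩, by simp [hy]⟩
  · have hbx : lo ≤ b.1 ∧ b.1 ≤ hi := by
      have hbP : (b.1, y) ∈ P := by
        have := h.2 b.1 (by omega)
        exact this
      rcases le_total b.1 a.1 with hba | hba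
      · have hbL : b.1 ∈ L := by
          refine Finset.mem_filter.2 ⟨hmemT _ hbP, hba, ?_⟩
          intro x hx
          rw [Finset.mem_Icc] at hx
          exact h.2 x (by omega)
        exact ⟨Finset.min'_le _ _ hbL, by omega⟩
      · have hbR : b.1 ∈ R := by
          refine Finset.mem_filter.2 ⟨hmemT _ hbP, hba, ?_⟩
          intro x hx
          rw [Finset.mem_Icc] at hx
          exact h.2 x (by omega)
        exact ⟨by omega, Finset.le_max' _ _ hbR⟩
    refine Finset.mem_image.2 ⟨b.1, Finset.mem_Icc.2 hbx, ?_⟩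
    have : y = b.2 := h.1
    rw [this]

lemma exists_maxV_s7 (P : Finset Cell) {a b : Cell} (h : ColConn P a b) :
    ∃ I, IsMaxVInterval P I ∧ a ∈ I ∧ b ∈ I := by
  classical
  set x0 := a.1 with hx0
  set L : Finset ℤ := ((P.filter (fun p => p.1 = x0)).image Prod.snd).filter
    (fun y' => y' ≤ a.2 ∧ ∀ y ∈ Finset.Icc y' a.2, (x0, y) ∈ P) with hL
  set R : Finset ℤ := ((P.filter (fun p => p.1 = x0)).image Prod.snd).filter
    (fun b' => a.2 ≤ b' ∧ ∀ y ∈ Finset.Icc a.2 b', (x0, y) ∈ P) with hR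
  have hmemT : ∀ y : ℤ, (x0, y) ∈ P → y ∈ (P.filter (fun p => p.1 = x0)).image Prod.snd := by
    intro y hy
    exact Finset.mem_image.2 ⟨(x0, y), Finset.mem_filter.2 ⟨hy, rfl⟩, rfl⟩
  have haP : (x0, a.2) ∈ P := by simpa using h.mem_left
  have haL : a.2 ∈ L := by
    refine Finset.mem_filter.2 ⟨hmemT _ haP, le_rfl, ?_⟩
    intro y hy
    simp only [Finset.mem_Icc] at hy
    have : y = a.2 := by omega
    subst this; exact haP
  have haR : a.2 ∈ R := by
    refine Finset.mem_filter.2 ⟨hmemT _ haP, le_rfl, ?_⟩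
    intro y hy
    simp only [Finset.mem_Icc] at hy
    have : y = a.2 := by omega
    subst this; exact haP
  set lo := L.min' ⟨a.2, haL⟩ with hlo
  set hi := R.max' ⟨a.2, haR⟩ with hhi
  have hloL : lo ∈ L := Finset.min'_mem _ _
  have hhiR : hi ∈ R := Finset.max'_mem _ _
  have hloa : lo ≤ a.2 := (Finset.mem_filter.1 hloL).2.1
  have hahi : a.2 ≤ hi := (Finset.mem_filter.1 hhiR).2.1
  have hgoodL : ∀ y ∈ Finset.Icc lo a.2, (x0, y) ∈ P := (Finset.mem_filter.1 hloL).2.2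
  have hgoodR : ∀ y ∈ Finset.Icc a.2 hi, (x0, y) ∈ P := (Finset.mem_filter.1 hhiR).2.2
  have hseg : ∀ y : ℤ, lo ≤ y → y ≤ hi → (x0, y) ∈ P := by
    intro y h1 h2
    rcases le_or_gt y a.2 with h3 | h3
    · exact hgoodL y (Finset.mem_Icc.2 ⟨h1, h3⟩)
    · exact hgoodR y (Finset.mem_Icc.2 ⟨by omega, h2⟩)
  refine ⟨(Finset.Icc lo hi).image (fun y => (x0, y)), ⟨⟨x0, lo, hi, by omega, rfl⟩, ?_, ?_⟩, ?_, ?_⟩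
  · intro p hp
    obtain ⟨y, hy, rfl⟩ := Finset.mem_image.1 hp
    rw [Finset.mem_Icc] at hy
    exact hseg y hy.1 hy.2
  · rintro I' ⟨x', a', b', hab', rfl⟩ hsub' hII'
    have hmemI : ∀ y : ℤ, lo ≤ y → y ≤ hi →
        (x0, y) ∈ (Finset.Icc lo hi).image (fun y => (x0, y)) := by
      intro y h1 h2
      exact Finset.mem_image.2 ⟨y, Finset.mem_Icc.2 ⟨h1, h2⟩, rfl⟩
    have hloI : (x0, lo) ∈ (Finset.Icc a' b').image (fun y => (x', y)) :=
      hII' (hmemI lo le_rfl (by omega))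
    have hhiI : (x0, hi) ∈ (Finset.Icc a' b').image (fun y => (x', y)) :=
      hII' (hmemI hi (by omega) le_rfl)
    obtain ⟨y1, hy1, hy1e⟩ := Finset.mem_image.1 hloI
    obtain ⟨y2, hy2, hy2e⟩ := Finset.mem_image.1 hhiI
    have hx' : x' = x0 := (Prod.mk.injEq _ _ _ _ ▸ hy1e).1
    have hy1' : y1 = lo := (Prod.mk.injEq _ _ _ _ ▸ hy1e).2
    have hy2' : y2 = hi := (Prod.mk.injEq _ _ _ _ ▸ hy2e).2
    subst hx' hy1' hy2'
    rw [Finset.mem_Icc] at hy1 hy2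
    have hsubP : ∀ y : ℤ, a' ≤ y → y ≤ b' → (x0, y) ∈ P := by
      intro y h1 h2
      exact hsub' (Finset.mem_image.2 ⟨y, Finset.mem_Icc.2 ⟨h1, h2⟩, rfl⟩)
    have ha'L : a' ∈ L := by
      refine Finset.mem_filter.2 ⟨hmemT _ (hsubP a' le_rfl hab'), by omega, ?_⟩
      intro y hy
      rw [Finset.mem_Icc] at hy
      exact hsubP y hy.1 (by omega)
    have hb'R : b' ∈ R := by
      refine Finset.mem_filter.2 ⟨hmemT _ (hsubP b' (by omega) le_rfl), by omega, ?_⟩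
      intro y hy
      rw [Finset.mem_Icc] at hy
      exact hsubP y (by omega) hy.2
    have h1 : lo ≤ a' := Finset.min'_le _ _ ha'L
    have h2 : b' ≤ hi := Finset.le_max' _ _ hb'R
    have : a' = lo := by omega
    subst this
    have : b' = hi := by omega
    subst this
    rfl
  · refine Finset.mem_image.2 ⟨a.2, Finset.mem_Icc.2 ⟨hloa, hahi⟩, by simp [hx0]⟩
  · have hbx : lo ≤ b.2 ∧ b.2 ≤ hi := by
      have hbP : (x0, b.2) ∈ P := h.2 b.2 (by omega)
      rcases le_total b.2 a.2 with hba | hba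
      · have hbL : b.2 ∈ L := by
          refine Finset.mem_filter.2 ⟨hmemT _ hbP, hba, ?_⟩
          intro y hy
          rw [Finset.mem_Icc] at hy
          exact h.2 y (by omega)
        exact ⟨Finset.min'_le _ _ hbL, by omega⟩
      · have hbR : b.2 ∈ R := by
          refine Finset.mem_filter.2 ⟨hmemT _ hbP, hba, ?_⟩
          intro y hy
          rw [Finset.mem_Icc] at hy
          exact h.2 y (by omega)
        exact ⟨by omega, Finset.le_max' _ _ hbR⟩
    refine Finset.mem_image.2 ⟨b.2, Finset.mem_Icc.2 hbx, ?_⟩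
    have : x0 = b.1 := h.1
    rw [this]

lemma attacks_of_rowConn {P : Finset Cell} {a b : Cell} (h : RowConn P a b) (hne : a ≠ b) :
    Attacks P a b := by
  obtain ⟨I, hI, ha, hb⟩ := exists_maxH_s7 P h
  exact ⟨hne, I, Or.inl hI, ha, hb⟩

lemma attacks_of_colConn {P : Finset Cell} {a b : Cell} (h : ColConn P a b) (hne : a ≠ b) :
    Attacks P a b := by
  obtain ⟨I, hI, ha, hb⟩ := exists_maxV_s7 P h
  exact ⟨hne, I, Or.inr hI, ha, hb⟩

lemma conn_of_attacks {P : Finset Cell} {a b : Cell} (h : Attacks P a b) :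
    RowConn P a b ∨ ColConn P a b := by
  obtain ⟨hne, I, hI, haI, hbI⟩ := h
  rcases hI with ⟨⟨y, lo, hi, hlohi, rfl⟩, hsub, -⟩ | ⟨⟨x0, lo, hi, hlohi, rfl⟩, hsub, -⟩
  · obtain ⟨xa, hxa, rfl⟩ := Finset.mem_image.1 haI
    obtain ⟨xb, hxb, hbe⟩ := Finset.mem_image.1 hbI
    rw [Finset.mem_Icc] at hxa hxb
    left
    constructor
    · rw [← hbe]
    · intro x hx
      refine hsub (Finset.mem_image.2 ⟨x, Finset.mem_Icc.2 ?_, rfl⟩)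
      have : (xb, y).1 = b.1 := by rw [hbe]
      simp only at hx ⊢
      omega
  · obtain ⟨ya, hya, rfl⟩ := Finset.mem_image.1 haI
    obtain ⟨yb, hyb, hbe⟩ := Finset.mem_image.1 hbI
    rw [Finset.mem_Icc] at hya hyb
    right
    constructor
    · rw [← hbe]
    · intro y hy
      refine hsub (Finset.mem_image.2 ⟨y, Finset.mem_Icc.2 ?_, rfl⟩)
      have : (x0, yb).2 = b.2 := by rw [hbe]
      simp only at hy ⊢
      omega

lemma Attacks.symm' {P : Finset Cell} {a b : Cell} (h : Attacks P a b) : Attacks P b a := by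
  obtain ⟨hne, I, hI, ha, hb⟩ := h
  exact ⟨hne.symm, I, hI, hb, ha⟩

end AuxDev2
section AuxDev3

/-- One "rook step": a direct row or column segment inside `P`. -/
def SegStep (P : Finset Cell) (a b : Cell) : Prop := RowConn P a b ∨ ColConn P a b

lemma SegStep.mem_left {P : Finset Cell} {a b : Cell} (h : SegStep P a b) : a ∈ P := by
  rcases h with h | h
  · exact h.mem_left
  · exact h.mem_left

lemma SegStep.mem_right {P : Finset Cell} {a b : Cell} (h : SegStep P a b) : b ∈ P := by
  rcases h with h | h
  · exact h.mem_right
  · exact h.mem_right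

/-- A chain of `n` rook steps. -/
def SegChain (P : Finset Cell) : ℕ → Cell → Cell → Prop
  | 0, a, b => a = b
  | n+1, a, b => ∃ u, SegStep P a u ∧ SegChain P n u b

lemma segChain_snoc {P : Finset Cell} : ∀ {n : ℕ} {a b : Cell},
    SegChain P (n+1) a b ↔ ∃ w, SegChain P n a w ∧ SegStep P w b := by
  intro n
  induction n with
  | zero =>
    intro a b
    constructor
    · rintro ⟨u, hs, he⟩
      have he' : u = b := he
      subst he'
      exact ⟨a, rfl, hs⟩
    · rintro ⟨w, he, hs⟩
      have he' : a = w := he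
      subst he'
      exact ⟨b, hs, rfl⟩
  | succ m ih =>
    intro a b
    constructor
    · rintro ⟨u, hs, hc⟩
      obtain ⟨w, hc', hs'⟩ := ih.1 hc
      exact ⟨w, ⟨u, hs, hc'⟩, hs'⟩
    · rintro ⟨w, ⟨u, hs, hc⟩, hs'⟩
      exact ⟨u, hs, ih.2 ⟨w, hc, hs'⟩⟩

lemma segStep_of_adjacent {P : Finset Cell} {a b : Cell} (hadj : Adjacent a b)
    (ha : a ∈ P) (hb : b ∈ P) : SegStep P a b := by
  rcases hadj with ⟨h1, h2⟩ | ⟨h1, h2⟩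
  · right
    refine ⟨h1, fun y hy => ?_⟩
    have hy2 : y = a.2 ∨ y = b.2 := by omega
    rcases hy2 with h | h
    · subst h; simpa using ha
    · subst h; rw [h1]; simpa using hb
  · left
    refine ⟨h1, fun x hx => ?_⟩
    have hx2 : x = a.1 ∨ x = b.1 := by omega
    rcases hx2 with h | h
    · subst h; simpa using ha
    · subst h; rw [h1]; simpa using hb

lemma exists_chain {P : Finset Cell} (hP : IsPolyomino P) {c d : Cell} (hc : c ∈ P)
    (hd : d ∈ P) : ∃ n, SegChain P n c d := by
  have h := hP.2 c hc d hd
  clear hd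
  induction h with
  | refl => exact ⟨0, rfl⟩
  | tail h1 h2 ih =>
    obtain ⟨n, hn⟩ := ih
    exact ⟨n + 1, segChain_snoc.2 ⟨_, hn, segStep_of_adjacent h2.1 h2.2.1 h2.2.2⟩⟩

/-- Reachability by a path with at most two changes of direction. -/
def Reach3 (P : Finset Cell) (c d : Cell) : Prop :=
  (∃ u v, RowConn P c u ∧ ColConn P u v ∧ RowConn P v d) ∨
  (∃ u v, ColConn P c u ∧ RowConn P u v ∧ ColConn P v d)

lemma reach3_of_step {P : Finset Cell} {c d : Cell} (h : SegStep P c d) : Reach3 P c d := by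
  rcases h with h | h
  · exact Or.inl ⟨d, d, h, ColConn.refl h.mem_right, RowConn.refl h.mem_right⟩
  · exact Or.inr ⟨d, d, h, RowConn.refl h.mem_right, ColConn.refl h.mem_right⟩

lemma reach3_of_two {P : Finset Cell} {c u d : Cell} (h1 : SegStep P c u)
    (h2 : SegStep P u d) : Reach3 P c d := by
  rcases h1 with h1 | h1 <;> rcases h2 with h2 | h2
  · exact reach3_of_step (Or.inl (h1.trans h2))
  · exact Or.inl ⟨u, d, h1, h2, RowConn.refl h2.mem_right⟩
  · exact Or.inr ⟨u, d, h1, h2, ColConn.refl h2.mem_right⟩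
  · exact reach3_of_step (Or.inr (h1.trans h2))

lemma reach3_of_three {P : Finset Cell} {c u v d : Cell} (h1 : SegStep P c u)
    (h2 : SegStep P u v) (h3 : SegStep P v d) : Reach3 P c d := by
  rcases h1 with h1 | h1 <;> rcases h2 with h2 | h2
  · exact reach3_of_two (Or.inl (h1.trans h2)) h3
  · rcases h3 with h3 | h3
    · exact Or.inl ⟨u, v, h1, h2, h3⟩
    · exact reach3_of_two (Or.inl h1) (Or.inr (h2.trans h3))
  · rcases h3 with h3 | h3
    · exact reach3_of_two (Or.inr h1) (Or.inl (h2.trans h3))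
    · exact Or.inr ⟨u, v, h1, h2, h3⟩
  · exact reach3_of_two (Or.inr (h1.trans h2)) h3

lemma reach3_of_chain_le3 {P : Finset Cell} {n : ℕ} {c d : Cell} (h : SegChain P n c d)
    (hn : n ≤ 3) (hc : c ∈ P) : Reach3 P c d := by
  interval_cases n
  · have he : c = d := h
    subst he
    exact Or.inl ⟨c, c, RowConn.refl hc, ColConn.refl hc, RowConn.refl hc⟩
  · obtain ⟨u, hs, he⟩ := h
    have he' : u = d := he
    subst he'
    exact reach3_of_step hs
  · obtain ⟨u, hs, v, hs2, he⟩ := h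
    have he' : v = d := he
    subst he'
    exact reach3_of_two hs hs2
  · obtain ⟨u, hs, v, hs2, w, hs3, he⟩ := h
    have he' : w = d := he
    subst he'
    exact reach3_of_three hs hs2 hs3

lemma not_chordal_of_sq {P : Finset Cell} {a1 b1 a2 b2 : Cell}
    (ma1 : a1 ∈ P) (mb1 : b1 ∈ P) (ma2 : a2 ∈ P) (mb2 : b2 ∈ P)
    (h11 : Attacks P a1 b1) (h22 : Attacks P a2 b2)
    (n11 : ¬ Attacks P a1 a2) (n12 : ¬ Attacks P a1 b2)
    (n21 : ¬ Attacks P b1 a2) (n22 : ¬ Attacks P b1 b2)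
    (d13 : a1 ≠ a2) (d14 : a1 ≠ b2) (d23 : b1 ≠ a2) (d24 : b1 ≠ b2) :
    ¬ IsChordal (GBar P) := by
  intro hch
  apply hch 4 le_rfl
  classical
  set f : ZMod 4 → {c : Cell // c ∈ P} := fun i =>
    if i = 0 then ⟨a1, ma1⟩ else if i = 1 then ⟨a2, ma2⟩
    else if i = 2 then ⟨b1, mb1⟩ else ⟨b2, mb2⟩ with hf
  have e0 : f 0 = ⟨a1, ma1⟩ := by
    simp only [hf]
    norm_num
  have e1 : f 1 = ⟨a2, ma2⟩ := by
    simp only [hf]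
    rw [if_neg (show ¬ ((1 : ZMod 4) = 0) by decide)]
    simp
  have e2 : f 2 = ⟨b1, mb1⟩ := by
    simp only [hf]
    rw [if_neg (show ¬ ((2 : ZMod 4) = 0) by decide),
      if_neg (show ¬ ((2 : ZMod 4) = 1) by decide)]
    simp
  have e3 : f 3 = ⟨b2, mb2⟩ := by
    simp only [hf]
    rw [if_neg (show ¬ ((3 : ZMod 4) = 0) by decide),
      if_neg (show ¬ ((3 : ZMod 4) = 1) by decide),
      if_neg (show ¬ ((3 : ZMod 4) = 2) by decide)]
  have hall : ∀ i : ZMod 4, i = 0 ∨ i = 1 ∨ i = 2 ∨ i = 3 := by decide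
  have k1 : a1 ≠ b1 := h11.1
  have k2 : a2 ≠ b2 := h22.1
  have hGadj : ∀ p q : {c : Cell // c ∈ P},
      (GBar P).Adj p q ↔ ((p : Cell) ≠ (q : Cell) ∧ ¬ Attacks P (p : Cell) (q : Cell)) := by
    intro p q
    rw [show GBar P = (GP P)ᶜ from rfl, SimpleGraph.compl_adj]
    constructor
    · rintro ⟨h1, h2⟩
      exact ⟨fun he => h1 (Subtype.ext he), h2⟩
    · rintro ⟨h1, h2⟩
      exact ⟨fun he => h1 (congrArg Subtype.val he), h2⟩
  refine ⟨by norm_num, f, ?_, ?_⟩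
  · intro i j hij
    rcases hall i with rfl | rfl | rfl | rfl <;> rcases hall j with rfl | rfl | rfl | rfl <;>
      first
        | rfl
        | (simp only [e0, e1, e2, e3, Subtype.mk.injEq] at hij
           first
             | exact absurd hij d13 | exact absurd hij d14
             | exact absurd hij d23 | exact absurd hij d24
             | exact absurd hij k1 | exact absurd hij k2
             | exact absurd hij.symm d13 | exact absurd hij.symm d14
             | exact absurd hij.symm d23 | exact absurd hij.symm d24
             | exact absurd hij.symm k1 | exact absurd hij.symm k2)
  · intro i j
    rcases hall i with rfl | rfl | rfl | rfl <;> rcases hall j with rfl | rfl | rfl | rfl <;>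
      rw [hGadj] <;> simp only [e0, e1, e2, e3]
    · exact iff_of_false (fun h => h.1 rfl) (by decide)
    · exact iff_of_true ⟨d13, n11⟩ (by decide)
    · exact iff_of_false (fun h => h.2 h11) (by decide)
    · exact iff_of_true ⟨d14, n12⟩ (by decide)
    · exact iff_of_true ⟨Ne.symm d13, fun h => n11 h.symm'⟩ (by decide)
    · exact iff_of_false (fun h => h.1 rfl) (by decide)
    · exact iff_of_true ⟨Ne.symm d23, fun h => n21 h.symm'⟩ (by decide)
    · exact iff_of_false (fun h => h.2 h22) (by decide)
    · exact iff_of_false (fun h => h.2 h11.symm') (by decide)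
    · exact iff_of_true ⟨d23, n21⟩ (by decide)
    · exact iff_of_false (fun h => h.1 rfl) (by decide)
    · exact iff_of_true ⟨d24, n22⟩ (by decide)
    · exact iff_of_true ⟨Ne.symm d14, fun h => n12 h.symm'⟩ (by decide)
    · exact iff_of_false (fun h => h.2 h22.symm') (by decide)
    · exact iff_of_true ⟨Ne.symm d24, fun h => n22 h.symm'⟩ (by decide)
    · exact iff_of_false (fun h => h.1 rfl) (by decide)

lemma reach3_of_chordal {P : Finset Cell} (hP : IsPolyomino P) (hch : IsChordal (GBar P))
    {c d : Cell} (hc : c ∈ P) (hd : d ∈ P) : Reach3 P c d := by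
  by_contra hr
  classical
  have hex : ∃ n, SegChain P n c d := exists_chain hP hc hd
  have hchain : SegChain P (Nat.find hex) c d := Nat.find_spec hex
  have hmin : ∀ m, m < Nat.find hex → ¬ SegChain P m c d := fun m hm => Nat.find_min hex hm
  have hn4 : 4 ≤ Nat.find hex := by
    by_contra h4
    push_neg at h4
    exact hr (reach3_of_chain_le3 hchain (by omega) hc)
  rw [show Nat.find hex = (Nat.find hex - 2) + 1 + 1 by omega] at hchain
  obtain ⟨u, hcu, hch2⟩ := hchain
  obtain ⟨w, hc2, hwd⟩ := segChain_snoc.1 hch2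
  have hchain1 : ∀ {x y : Cell}, SegStep P x y → SegChain P 1 x y :=
    fun h => ⟨_, h, rfl⟩
  have hchain2 : ∀ {x y z : Cell}, SegStep P x y → SegStep P y z → SegChain P 2 x z :=
    fun h1 h2 => ⟨_, h1, _, h2, rfl⟩
  have hchain3 : ∀ {x y z t : Cell}, SegStep P x y → SegStep P y z → SegStep P z t →
      SegChain P 3 x t := fun h1 h2 h3 => ⟨_, h1, _, h2, _, h3, rfl⟩
  have hne_cu : c ≠ u := by
    intro h
    rw [← h] at hch2
    exact hmin _ (by omega) hch2
  have hne_wd : w ≠ d := by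
    intro h
    rw [h] at hc2
    exact hmin _ (by omega) (show SegChain P ((Nat.find hex - 2) + 1) c d from ⟨u, hcu, hc2⟩)
  have hne_cw : c ≠ w := by
    intro h
    rw [← h] at hwd
    exact hmin 1 (by omega) (hchain1 hwd)
  have hne_cd : c ≠ d := by
    intro h
    exact hmin 0 (by omega) h
  have hne_uw : u ≠ w := by
    intro h
    rw [← h] at hwd
    exact hmin 2 (by omega) (hchain2 hcu hwd)
  have hne_ud : u ≠ d := by
    intro h
    rw [h] at hcu
    exact hmin 1 (by omega) (hchain1 hcu)
  have hA1 : Attacks P c u := by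
    rcases hcu with h | h
    · exact attacks_of_rowConn h hne_cu
    · exact attacks_of_colConn h hne_cu
  have hA2 : Attacks P w d := by
    rcases hwd with h | h
    · exact attacks_of_rowConn h hne_wd
    · exact attacks_of_colConn h hne_wd
  have hn_cw : ¬ Attacks P c w := fun h =>
    hmin 2 (by omega) (hchain2 (conn_of_attacks h) hwd)
  have hn_cd : ¬ Attacks P c d := fun h =>
    hmin 1 (by omega) (hchain1 (conn_of_attacks h))
  have hn_uw : ¬ Attacks P u w := fun h =>
    hmin 3 (by omega) (hchain3 hcu (conn_of_attacks h) hwd)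
  have hn_ud : ¬ Attacks P u d := fun h =>
    hmin 2 (by omega) (hchain2 hcu (conn_of_attacks h))
  exact not_chordal_of_sq hc hcu.mem_right hwd.mem_left hd hA1 hA2 hn_cw hn_cd hn_uw hn_ud
    hne_cw hne_cd hne_uw hne_ud hch

end AuxDev3
section AuxDev4

lemma getD_map_range (N : ℕ) (g : ℕ → Cell) (i : ℕ) (hi : i < N) :
    (((List.range N).map g).getD i (0, 0)) = g i := by
  rw [List.getD_eq_getElem _ _ (by simpa using hi)]
  simp

lemma length_map_range (N : ℕ) (g : ℕ → Cell) : ((List.range N).map g).length = N := by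
  simp

/-- A straight horizontal path between two row-connected cells. -/
lemma straight_path (P : Finset Cell) (c d : Cell) (h : RowConn P c d) :
    ∃ l : List Cell, IsCellPath P l ∧ l.head? = some c ∧ l.getLast? = some d ∧
      dirChanges l ≤ 2 := by
  obtain ⟨s, hs, hsA⟩ : ∃ s : ℤ, (s = 1 ∨ s = -1) ∧
      s * ((d.1 - c.1).natAbs : ℤ) = d.1 - c.1 := by
    rcases le_total c.1 d.1 with hle | hle
    · exact ⟨1, Or.inl rfl, by omega⟩
    · exact ⟨-1, Or.inr rfl, by omega⟩
  set A := (d.1 - c.1).natAbs with hA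
  set g : ℕ → Cell := fun i => (c.1 + s * i, c.2) with hg
  have hgd : g A = d := by
    rw [hg, show d = (d.1, d.2) from rfl, Prod.mk.injEq]
    exact ⟨by omega, h.1⟩
  refine ⟨(List.range (A + 1)).map g, ⟨?_, ?_, ?_⟩, ?_, ?_, ?_⟩
  · refine List.Nodup.map_on ?_ List.nodup_range
    intro i _ j _ hij
    rw [hg, Prod.mk.injEq] at hij
    rcases hs with rfl | rfl <;> omega
  · intro p hp
    obtain ⟨i, hi, rfl⟩ := List.mem_map.1 hp
    rw [List.mem_range] at hi
    exact h.2 _ (by rcases hs with rfl | rfl <;> omega)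
  · change List.IsChain Adjacent _
    rw [List.isChain_map, List.isChain_range_succ]
    intro m hm
    rw [hg]
    show Adjacent (c.1 + s * m, c.2) (c.1 + s * (m+1), c.2)
    rw [Adjacent]
    rcases hs with rfl | rfl
    · right
      exact ⟨rfl, by push_cast; omega⟩
    · right
      exact ⟨rfl, by push_cast; omega⟩
  · rw [List.range_succ_eq_map]
    simp [hg]
  · rw [List.getLast?_eq_getElem?]
    simp [hgd]
  · rw [dirChanges]
    have : ∀ k ∈ Finset.Ico 1 (((List.range (A + 1)).map g).length - 1),
        ¬ ((((List.range (A + 1)).map g).getD (k - 1) (0, 0)).1 ≠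
            ((((List.range (A + 1)).map g)).getD (k + 1) (0, 0)).1 ∧
          (((List.range (A + 1)).map g).getD (k - 1) (0, 0)).2 ≠
            ((((List.range (A + 1)).map g)).getD (k + 1) (0, 0)).2) := by
      intro k hk
      rw [length_map_range, Finset.mem_Ico] at hk
      rw [getD_map_range _ _ _ (by omega), getD_map_range _ _ _ (by omega)]
      rw [hg]
      intro hcon
      exact hcon.2 rfl
    rw [Finset.filter_eq_empty_iff.2 this]
    simp

end AuxDev4
section AuxDev5

/-- A path with at most two changes of direction realizing a row-col-row chain. -/
lemma zpath_HVH (P : Finset Cell) (c u v d : Cell) (h1 : RowConn P c u)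
    (h2 : ColConn P u v) (h3 : RowConn P v d) (huv : u ≠ v) :
    ∃ l : List Cell, IsCellPath P l ∧ l.head? = some c ∧ l.getLast? = some d ∧
      dirChanges l ≤ 2 := by
  obtain ⟨s1, hs1, hA⟩ : ∃ s : ℤ, (s = 1 ∨ s = -1) ∧
      s * ((u.1 - c.1).natAbs : ℤ) = u.1 - c.1 := by
    rcases le_total c.1 u.1 with hle | hle
    · exact ⟨1, Or.inl rfl, by omega⟩
    · exact ⟨-1, Or.inr rfl, by omega⟩
  obtain ⟨s2, hs2, hB⟩ : ∃ s : ℤ, (s = 1 ∨ s = -1) ∧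
      s * ((v.2 - u.2).natAbs : ℤ) = v.2 - u.2 := by
    rcases le_total u.2 v.2 with hle | hle
    · exact ⟨1, Or.inl rfl, by omega⟩
    · exact ⟨-1, Or.inr rfl, by omega⟩
  obtain ⟨s3, hs3, hC⟩ : ∃ s : ℤ, (s = 1 ∨ s = -1) ∧
      s * ((d.1 - v.1).natAbs : ℤ) = d.1 - v.1 := by
    rcases le_total v.1 d.1 with hle | hle
    · exact ⟨1, Or.inl rfl, by omega⟩
    · exact ⟨-1, Or.inr rfl, by omega⟩
  set A := (u.1 - c.1).natAbs with hAd
  set B := (v.2 - u.2).natAbs with hBd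
  set C := (d.1 - v.1).natAbs with hCd
  have e1 : c.2 = u.2 := h1.1
  have e2 : u.1 = v.1 := h2.1
  have e3 : v.2 = d.2 := h3.1
  have hne2 : u.2 ≠ v.2 := fun he => huv (Prod.ext h2.1 he)
  have hB1 : 1 ≤ B := by omega
  set g : ℕ → Cell := fun i =>
    if i ≤ A then (c.1 + s1 * i, c.2)
    else if i ≤ A + B then (u.1, u.2 + s2 * ((i : ℤ) - (A : ℤ)))
    else (v.1 + s3 * ((i : ℤ) - (A : ℤ) - (B : ℤ)), d.2) with hg
  have hval1 : ∀ i : ℕ, i ≤ A → g i = (c.1 + s1 * i, c.2) := by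
    intro i hi
    rw [hg]
    dsimp only
    rw [if_pos hi]
  have hval2 : ∀ i : ℕ, A < i → i ≤ A + B →
      g i = (u.1, u.2 + s2 * ((i : ℤ) - (A : ℤ))) := by
    intro i hi1 hi2
    rw [hg]
    dsimp only
    rw [if_neg (by omega), if_pos hi2]
  have hval3 : ∀ i : ℕ, A + B < i →
      g i = (v.1 + s3 * ((i : ℤ) - (A : ℤ) - (B : ℤ)), d.2) := by
    intro i hi
    rw [hg]
    dsimp only
    rw [if_neg (by omega), if_neg (by omega)]
  have hsnd1 : ∀ i : ℕ, i ≤ A → (g i).2 = c.2 := by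
    intro i hi
    rw [hval1 i hi]
  have hfst2 : ∀ i : ℕ, A ≤ i → i ≤ A + B → (g i).1 = u.1 := by
    intro i hi1 hi2
    rcases eq_or_lt_of_le hi1 with heq | hlt
    · rw [hval1 i (by omega)]
      show c.1 + s1 * (i : ℤ) = u.1
      rcases hs1 with rfl | rfl <;> omega
    · rw [hval2 i hlt hi2]
  have hsnd3 : ∀ i : ℕ, A + B ≤ i → (g i).2 = d.2 := by
    intro i hi
    rcases eq_or_lt_of_le hi with heq | hlt
    · rw [hval2 i (by omega) (by omega)]
      show u.2 + s2 * ((i : ℤ) - (A : ℤ)) = d.2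
      rcases hs2 with rfl | rfl <;> omega
    · rw [hval3 i hlt]
  have hg0 : g 0 = c := by
    rw [hval1 0 (by omega), show c = (c.1, c.2) from rfl, Prod.mk.injEq]
    constructor
    · push_cast
      ring
    · rfl
  have hgend : g (A + B + C) = d := by
    rcases Nat.eq_zero_or_pos C with hc0 | hc0
    · rw [hval2 (A + B + C) (by omega) (by omega), show d = (d.1, d.2) from rfl,
        Prod.mk.injEq]
      constructor
      · rcases hs3 with rfl | rfl <;> omega
      · rcases hs2 with rfl | rfl <;> push_cast <;> omega
    · rw [hval3 (A + B + C) (by omega), show d = (d.1, d.2) from rfl, Prod.mk.injEq]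
      constructor
      · rcases hs3 with rfl | rfl <;> push_cast <;> omega
      · rfl
  refine ⟨(List.range (A + B + C + 1)).map g, ⟨?_, ?_, ?_⟩, ?_, ?_, ?_⟩
  · refine List.Nodup.map_on ?_ List.nodup_range
    intro i hi j hj hij
    rw [List.mem_range] at hi hj
    rcases le_or_gt i A with hi1 | hi1 <;> rcases le_or_gt j A with hj1 | hj1
    · rw [hval1 i hi1, hval1 j hj1, Prod.mk.injEq] at hij
      rcases hs1 with rfl | rfl <;> omega
    · rcases le_or_gt j (A + B) with hj2 | hj2
      · rw [hval1 i hi1, hval2 j hj1 hj2, Prod.mk.injEq] at hij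
        rcases hs2 with rfl | rfl <;> omega
      · rw [hval1 i hi1, hval3 j hj2, Prod.mk.injEq] at hij
        omega
    · rcases le_or_gt i (A + B) with hi2 | hi2
      · rw [hval2 i hi1 hi2, hval1 j hj1, Prod.mk.injEq] at hij
        rcases hs2 with rfl | rfl <;> omega
      · rw [hval3 i hi2, hval1 j hj1, Prod.mk.injEq] at hij
        omega
    · rcases le_or_gt i (A + B) with hi2 | hi2 <;> rcases le_or_gt j (A + B) with hj2 | hj2
      · rw [hval2 i hi1 hi2, hval2 j hj1 hj2, Prod.mk.injEq] at hij
        rcases hs2 with rfl | rfl <;> omega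
      · rw [hval2 i hi1 hi2, hval3 j hj2, Prod.mk.injEq] at hij
        rcases hs3 with rfl | rfl <;> omega
      · rw [hval3 i hi2, hval2 j hj1 hj2, Prod.mk.injEq] at hij
        rcases hs3 with rfl | rfl <;> omega
      · rw [hval3 i hi2, hval3 j hj2, Prod.mk.injEq] at hij
        rcases hs3 with rfl | rfl <;> omega
  · intro p hp
    obtain ⟨i, hi, rfl⟩ := List.mem_map.1 hp
    rw [List.mem_range] at hi
    rcases le_or_gt i A with hi1 | hi1
    · rw [hval1 i hi1]
      exact h1.2 _ (by rcases hs1 with rfl | rfl <;> omega)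
    · rcases le_or_gt i (A + B) with hi2 | hi2
      · rw [hval2 i hi1 hi2]
        exact h2.2 _ (by rcases hs2 with rfl | rfl <;> omega)
      · rw [hval3 i hi2, show d.2 = v.2 from e3.symm]
        exact h3.2 _ (by rcases hs3 with rfl | rfl <;> omega)
  · change List.IsChain Adjacent _
    rw [List.isChain_map, List.isChain_range_succ]
    intro m hm
    rcases le_or_gt (m + 1) A with hm1 | hm1
    · rw [hval1 m (by omega), hval1 (m + 1) (by omega), Adjacent]
      right
      refine ⟨rfl, ?_⟩
      rcases hs1 with rfl | rfl <;> push_cast <;> omega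
    · rcases le_or_gt (m + 1) (A + B) with hm2 | hm2
      · rcases eq_or_lt_of_le (show A ≤ m by omega) with heq | hlt
        · rw [hval1 m (by omega), hval2 (m + 1) (by omega) hm2, Adjacent]
          left
          constructor
          · show c.1 + s1 * (m : ℤ) = u.1
            rcases hs1 with rfl | rfl <;> omega
          · show c.2 = u.2 + s2 * ((m : ℤ) + 1 - (A : ℤ)) + 1 ∨
              u.2 + s2 * ((m : ℤ) + 1 - (A : ℤ)) = c.2 + 1
            rcases hs2 with rfl | rfl <;> omega
        · rw [hval2 m hlt (by omega), hval2 (m + 1) (by omega) hm2, Adjacent]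
          left
          refine ⟨rfl, ?_⟩
          rcases hs2 with rfl | rfl <;> push_cast <;> omega
      · rcases eq_or_lt_of_le (show A + B ≤ m by omega) with heq | hlt
        · rw [hval2 m (by omega) (by omega), hval3 (m + 1) (by omega), Adjacent]
          right
          constructor
          · show u.2 + s2 * ((m : ℤ) - (A : ℤ)) = d.2
            rcases hs2 with rfl | rfl <;> omega
          · show u.1 = v.1 + s3 * ((m : ℤ) + 1 - (A : ℤ) - (B : ℤ)) + 1 ∨
              v.1 + s3 * ((m : ℤ) + 1 - (A : ℤ) - (B : ℤ)) = u.1 + 1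
            rcases hs3 with rfl | rfl <;> omega
        · rw [hval3 m hlt, hval3 (m + 1) (by omega), Adjacent]
          right
          refine ⟨rfl, ?_⟩
          rcases hs3 with rfl | rfl <;> push_cast <;> omega
  · rw [List.range_succ_eq_map]
    simp [hg0]
  · rw [List.getLast?_eq_getElem?]
    simp [hgend]
  · rw [dirChanges]
    have hsub : ((Finset.Ico 1 (((List.range (A + B + C + 1)).map g).length - 1)).filter
        (fun k =>
          ((((List.range (A + B + C + 1)).map g).getD (k - 1) (0, 0)).1 ≠
            (((List.range (A + B + C + 1)).map g).getD (k + 1) (0, 0)).1 ∧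
          ((((List.range (A + B + C + 1)).map g)).getD (k - 1) (0, 0)).2 ≠
            (((List.range (A + B + C + 1)).map g).getD (k + 1) (0, 0)).2))) ⊆
        {A, A + B} := by
      intro k hk
      rw [Finset.mem_filter, Finset.mem_Ico, length_map_range] at hk
      obtain ⟨⟨hk1, hk2⟩, hcond⟩ := hk
      rw [getD_map_range _ _ _ (by omega), getD_map_range _ _ _ (by omega)] at hcond
      rw [Finset.mem_insert, Finset.mem_singleton]
      by_contra hkn
      push_neg at hkn
      rcases lt_trichotomy k A with h | h | h
      · exact hcond.2 (by rw [hsnd1 _ (by omega), hsnd1 _ (by omega)])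
      · exact hkn.1 h
      · rcases lt_trichotomy k (A + B) with h' | h' | h'
        · exact hcond.1 (by rw [hfst2 _ (by omega) (by omega), hfst2 _ (by omega) (by omega)])
        · exact hkn.2 h'
        · exact hcond.2 (by rw [hsnd3 _ (by omega), hsnd3 _ (by omega)])
    refine le_trans (Finset.card_le_card hsub) ?_
    refine le_trans (Finset.card_insert_le _ _) ?_
    simp

end AuxDev5
section AuxDev6

/-- Transposition of the grid. -/
def cswap (p : Cell) : Cell := (p.2, p.1)

lemma cswap_inj : Function.Injective cswap := by
  intro a b h
  exact Prod.ext (congrArg Prod.snd h) (congrArg Prod.fst h)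

lemma adjacent_cswap {a b : Cell} (h : Adjacent a b) : Adjacent (cswap a) (cswap b) := by
  rw [Adjacent] at h ⊢
  rcases h with ⟨x, y⟩ | ⟨x, y⟩
  · exact Or.inr ⟨x, y⟩
  · exact Or.inl ⟨x, y⟩

lemma rowConn_cswap {P : Finset Cell} {a b : Cell} (h : ColConn P a b) :
    RowConn (P.image cswap) (cswap a) (cswap b) := by
  refine ⟨h.1, fun x hx => ?_⟩
  exact Finset.mem_image.2 ⟨(a.1, x), h.2 x hx, rfl⟩

lemma colConn_cswap {P : Finset Cell} {a b : Cell} (h : RowConn P a b) :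
    ColConn (P.image cswap) (cswap a) (cswap b) := by
  refine ⟨h.1, fun y hy => ?_⟩
  exact Finset.mem_image.2 ⟨(y, a.2), h.2 y hy, rfl⟩

lemma mem_of_cswap {P : Finset Cell} {p : Cell} (h : p ∈ P.image cswap) : cswap p ∈ P := by
  obtain ⟨q, hq, rfl⟩ := Finset.mem_image.1 h
  simpa [cswap] using hq

lemma getD_map_cswap (l : List Cell) (i : ℕ) :
    (l.map cswap).getD i (0, 0) = cswap (l.getD i (0, 0)) := by
  rcases lt_or_ge i l.length with h | h
  · rw [List.getD_eq_getElem _ _ (by simpa using h), List.getD_eq_getElem _ _ h]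
    simp
  · rw [List.getD_eq_default _ _ (by simpa using h), List.getD_eq_default _ _ h]
    rfl

lemma dirChanges_map_cswap (l : List Cell) : dirChanges (l.map cswap) = dirChanges l := by
  rw [dirChanges, dirChanges, List.length_map]
  congr 1
  refine Finset.filter_congr ?_
  intro k _
  rw [getD_map_cswap, getD_map_cswap]
  constructor
  · rintro ⟨x, y⟩
    exact ⟨y, x⟩
  · rintro ⟨x, y⟩
    exact ⟨y, x⟩

lemma pull_back (P : Finset Cell) (c d : Cell)
    (h : ∃ l : List Cell, IsCellPath (P.image cswap) l ∧ l.head? = some (cswap c) ∧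
      l.getLast? = some (cswap d) ∧ dirChanges l ≤ 2) :
    ∃ l : List Cell, IsCellPath P l ∧ l.head? = some c ∧ l.getLast? = some d ∧
      dirChanges l ≤ 2 := by
  obtain ⟨l, ⟨hnd, hmem, hchn⟩, hh, hl, hdc⟩ := h
  refine ⟨l.map cswap, ⟨hnd.map cswap_inj, ?_, ?_⟩, ?_, ?_, ?_⟩
  · intro p hp
    obtain ⟨q, hq, rfl⟩ := List.mem_map.1 hp
    exact mem_of_cswap (hmem q hq)
  · change List.IsChain Adjacent _
    rw [List.isChain_map]
    exact hchn.imp (fun a b => adjacent_cswap)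
  · rw [List.head?_map, hh]
    simp [cswap]
  · rw [show (List.map cswap l).getLast? = Option.map cswap l.getLast? from
      List.getLast?_map, hl]
    simp [cswap]
  · rw [dirChanges_map_cswap]
    exact hdc

end AuxDev6
/-- If `Ḡ_P` is chordal, any two cells of `P` are joined by a path of cells of
`P` with at most 2 changes of direction. -/
theorem statement7 (P : Finset Cell) (hP : IsPolyomino P)
    (hch : IsChordal (GBar P)) (c d : Cell) (hc : c ∈ P) (hd : d ∈ P) :
    ∃ l : List Cell, IsCellPath P l ∧ l.head? = some c ∧ l.getLast? = some d ∧
      dirChanges l ≤ 2 := by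
  have hr := reach3_of_chordal hP hch hc hd
  rcases hr with ⟨u, v, h1, h2, h3⟩ | ⟨u, v, h1, h2, h3⟩
  · by_cases huv : u = v
    · subst huv
      exact straight_path P c d (h1.trans h3)
    · exact zpath_HVH P c u v d h1 h2 h3 huv
  · by_cases huv : u = v
    · subst huv
      exact pull_back P c d (straight_path _ _ _ (rowConn_cswap (h1.trans h3)))
    · exact pull_back P c d
        (zpath_HVH _ _ _ _ _ (rowConn_cswap h1) (colConn_cswap h2) (rowConn_cswap h3)
          (fun he => huv (cswap_inj he)))
end
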